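/- arXiv:1505.07229 — 3 statements merged into one kernel-verified Lean document; each statement's English description precedes it below -/
import Mathlib

section
/- For every integer n ≥ 1, Σ_{λ ⊢ n} (−1)^{n + ℓ(λ)} equals the number of partitions of n into pairwise distinct odd parts, where the sum is over all partitions λ of n and ℓ(λ) denotes the number of parts of λ. Equivalently, the value at q = −1 of the polynomial A_n(q) = Σ_{λ ⊢ n} q^{n+ℓ(λ)} is the number of partitions of n with unequal odd parts. -/
open Finset

namespace DOP
open scoped Classical

noncomputable def P (n : ℕ) : Finset (Multiset ℕ) :=
  Finset.univ.image (fun p : Nat.Partition n => p.parts)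

lemma mem_P {n : ℕ} {s : Multiset ℕ} :
    s ∈ P n ↔ s.sum = n ∧ ∀ x ∈ s, 0 < x := by
  constructor
  · rintro hs
    simp only [P, mem_image, mem_univ, true_and] at hs
    obtain ⟨p, rfl⟩ := hs
    exact ⟨p.parts_sum, fun x hx => p.parts_pos hx⟩
  · rintro ⟨h1, h2⟩
    simp only [P, mem_image, mem_univ, true_and]
    exact ⟨⟨s, fun hx => h2 _ hx, h1⟩, rfl⟩

def isDO (s : Multiset ℕ) : Prop := s.Nodup ∧ ∀ x ∈ s, Odd x

noncomputable def DO (n : ℕ) : Finset (Multiset ℕ) := (P n).filter isDO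

lemma mem_DO {n : ℕ} {s : Multiset ℕ} :
    s ∈ DO n ↔ s.sum = n ∧ s.Nodup ∧ ∀ x ∈ s, Odd x := by
  simp only [DO, mem_filter, mem_P, isDO]
  constructor
  · rintro ⟨⟨h1, _⟩, h3, h4⟩; exact ⟨h1, h3, h4⟩
  · rintro ⟨h1, h3, h4⟩
    exact ⟨⟨h1, fun x hx => (h4 x hx).pos⟩, h3, h4⟩

noncomputable def f (n : ℕ) : ℤ := ∑ l ∈ P n, (-1) ^ (Multiset.card l)
noncomputable def g (n : ℕ) : ℤ := ∑ l ∈ DO n, (-1) ^ (Multiset.card l)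

def mtop (s : Multiset ℕ) : ℕ := WithBot.unbotD 0 (s.toFinset.max)

lemma mtop_mem {s : Multiset ℕ} (h : s ≠ 0) : mtop s ∈ s := by
  have hne : s.toFinset.Nonempty := by
    obtain ⟨x, hx⟩ := Multiset.exists_mem_of_ne_zero h
    exact ⟨x, Multiset.mem_toFinset.2 hx⟩
  have : s.toFinset.max = (s.toFinset.max' hne : ℕ) := (Finset.coe_max' hne).symm
  have hm : mtop s = s.toFinset.max' hne := by rw [mtop, this]; rfl
  rw [hm]
  exact Multiset.mem_toFinset.1 (Finset.max'_mem _ hne)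

lemma le_mtop {s : Multiset ℕ} {x : ℕ} (hx : x ∈ s) : x ≤ mtop s := by
  have hne : s.toFinset.Nonempty := ⟨x, Multiset.mem_toFinset.2 hx⟩
  have : s.toFinset.max = (s.toFinset.max' hne : ℕ) := (Finset.coe_max' hne).symm
  have hm : mtop s = s.toFinset.max' hne := by rw [mtop, this]; rfl
  rw [hm]
  exact Finset.le_max' _ _ (Multiset.mem_toFinset.2 hx)

/-! ### Identity A -/

noncomputable def Q (n : ℕ) : Finset (Multiset ℕ × Multiset ℕ) :=
  (Finset.range (n+1)).biUnion (fun m => (DO m) ×ˢ (P (n - m)))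

lemma mem_Q {n : ℕ} {p : Multiset ℕ × Multiset ℕ} :
    p ∈ Q n ↔ (p.1.Nodup ∧ ∀ x ∈ p.1, Odd x) ∧ (∀ x ∈ p.2, 0 < x) ∧ p.1.sum + p.2.sum = n := by
  simp only [Q, mem_biUnion, Finset.mem_range, Finset.mem_product, mem_DO, mem_P]
  constructor
  · rintro ⟨m, hm, ⟨hs, hn, ho⟩, hl, hp⟩
    exact ⟨⟨hn, ho⟩, hp, by omega⟩
  · rintro ⟨⟨hn, ho⟩, hp, hsum⟩
    exact ⟨p.1.sum, by omega, ⟨rfl, hn, ho⟩, by omega, hp⟩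

lemma sum_Q (n : ℕ) (F : Multiset ℕ → ℤ) :
    ∑ p ∈ Q n, F p.2 = ∑ m ∈ range (n+1), ((DO m).card : ℤ) * ∑ l ∈ P (n - m), F l := by
  rw [Q, Finset.sum_biUnion]
  · refine Finset.sum_congr rfl (fun m _ => ?_)
    rw [Finset.sum_product]
    simp [Finset.sum_const, mul_comm]
  · intro a _ b _ hab
    simp only [Finset.disjoint_left]
    rintro p hp hq
    rw [Finset.mem_product] at hp hq
    exact hab (by rw [← (mem_DO.1 hp.1).1, (mem_DO.1 hq.1).1])

def topOddP (p : Multiset ℕ × Multiset ℕ) : ℕ := mtop ((p.1 + p.2).filter (fun x => Odd x))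

lemma topOddP_spec {p : Multiset ℕ × Multiset ℕ} (h : ∃ x ∈ p.1 + p.2, Odd x) :
    topOddP p ∈ p.1 + p.2 ∧ Odd (topOddP p) := by
  obtain ⟨x, hx, hox⟩ := h
  have hne : (p.1 + p.2).filter (fun x => Odd x) ≠ 0 := by
    intro h0
    have := Multiset.mem_filter.2 ⟨hx, hox⟩
    rw [h0] at this
    exact absurd this (Multiset.notMem_zero x)
  have := mtop_mem hne
  rw [Multiset.mem_filter] at this
  exact ⟨this.1, this.2⟩

noncomputable def mvA (p : Multiset ℕ × Multiset ℕ) : Multiset ℕ × Multiset ℕ :=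
  if topOddP p ∈ p.1 then (p.1.erase (topOddP p), topOddP p ::ₘ p.2)
  else (topOddP p ::ₘ p.1, p.2.erase (topOddP p))

lemma mvA_union {p : Multiset ℕ × Multiset ℕ} (h : ∃ x ∈ p.1 + p.2, Odd x) :
    (mvA p).1 + (mvA p).2 = p.1 + p.2 := by
  obtain ⟨hk, hko⟩ := topOddP_spec h
  set k := topOddP p with hkdef
  rw [mvA]
  split_ifs with h1
  · show p.1.erase k + (k ::ₘ p.2) = p.1 + p.2
    rw [Multiset.add_cons, ← Multiset.cons_add, Multiset.cons_erase h1]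
  · have h2 : k ∈ p.2 := by
      rcases Multiset.mem_add.1 hk with h | h
      · exact absurd h h1
      · exact h
    show (k ::ₘ p.1) + p.2.erase k = p.1 + p.2
    rw [Multiset.cons_add, ← Multiset.add_cons, Multiset.cons_erase h2]


lemma mvA_mem {n : ℕ} {p : Multiset ℕ × Multiset ℕ} (hp : p ∈ Q n)
    (h : ∃ x ∈ p.1 + p.2, Odd x) : mvA p ∈ Q n := by
  obtain ⟨hk, hko⟩ := topOddP_spec h
  obtain ⟨⟨hnd, hodd⟩, hpos, hsum⟩ := mem_Q.1 hp
  set k := topOddP p with hkdef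
  rw [mem_Q]
  have hsum' : (mvA p).1.sum + (mvA p).2.sum = n := by
    have := congrArg Multiset.sum (mvA_union h)
    rw [Multiset.sum_add, Multiset.sum_add] at this
    rw [this]; exact hsum
  rw [mvA]
  split_ifs with h1
  · refine ⟨⟨hnd.erase _, fun x hx => hodd x (Multiset.mem_of_mem_erase hx)⟩, ?_, ?_⟩
    · intro x hx
      rcases Multiset.mem_cons.1 hx with rfl | hx
      · exact hko.pos
      · exact hpos x hx
    · have := hsum'
      rwa [mvA, if_pos h1] at this
  · have h2 : k ∈ p.2 := by
      rcases Multiset.mem_add.1 hk with h' | h'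
      · exact absurd h' h1
      · exact h'
    refine ⟨⟨Multiset.nodup_cons.2 ⟨h1, hnd⟩, ?_⟩, ?_, ?_⟩
    · intro x hx
      rcases Multiset.mem_cons.1 hx with rfl | hx
      · exact hko
      · exact hodd x hx
    · exact fun x hx => hpos x (Multiset.mem_of_mem_erase hx)
    · have := hsum'
      rwa [mvA, if_neg h1] at this

lemma mvA_card {p : Multiset ℕ × Multiset ℕ} (h : ∃ x ∈ p.1 + p.2, Odd x) :
    (-1 : ℤ) ^ (Multiset.card p.2) + (-1) ^ (Multiset.card (mvA p).2) = 0 := by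
  obtain ⟨hk, hko⟩ := topOddP_spec h
  set k := topOddP p with hkdef
  rw [mvA]
  split_ifs with h1
  · show (-1 : ℤ) ^ (Multiset.card p.2) + (-1) ^ (Multiset.card (k ::ₘ p.2)) = 0
    rw [Multiset.card_cons, pow_succ]
    ring
  · have h2 : k ∈ p.2 := by
      rcases Multiset.mem_add.1 hk with h' | h'
      · exact absurd h' h1
      · exact h'
    show (-1 : ℤ) ^ (Multiset.card p.2) + (-1) ^ (Multiset.card (p.2.erase k)) = 0
    have : p.2 = k ::ₘ p.2.erase k := (Multiset.cons_erase h2).symm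
    rw [this, Multiset.erase_cons_head, Multiset.card_cons, pow_succ]
    ring

lemma mvA_ne {p : Multiset ℕ × Multiset ℕ} (h : ∃ x ∈ p.1 + p.2, Odd x) :
    mvA p ≠ p := by
  intro heq
  have hc := mvA_card h
  rw [heq] at hc
  rcases neg_one_pow_eq_or ℤ (Multiset.card p.2) with h' | h' <;>
    rw [h'] at hc <;> norm_num at hc

lemma mvA_odd {p : Multiset ℕ × Multiset ℕ} (h : ∃ x ∈ p.1 + p.2, Odd x) :
    ∃ x ∈ (mvA p).1 + (mvA p).2, Odd x := by
  obtain ⟨hk, hko⟩ := topOddP_spec h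
  exact ⟨topOddP p, by rw [mvA_union h]; exact hk, hko⟩

lemma topOddP_mvA {p : Multiset ℕ × Multiset ℕ} (h : ∃ x ∈ p.1 + p.2, Odd x) :
    topOddP (mvA p) = topOddP p := by
  rw [topOddP, topOddP, mvA_union h]

lemma mvA_invol {p : Multiset ℕ × Multiset ℕ} (hnd : p.1.Nodup)
    (h : ∃ x ∈ p.1 + p.2, Odd x) : mvA (mvA p) = p := by
  obtain ⟨hk, hko⟩ := topOddP_spec h
  set k := topOddP p with hkdef
  have htop : topOddP (mvA p) = k := topOddP_mvA h
  rcases Classical.em (k ∈ p.1) with h1 | h1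
  · have hmv : mvA p = (p.1.erase k, k ::ₘ p.2) := by rw [mvA, if_pos h1]
    have hnot : k ∉ p.1.erase k := by
      rw [← Multiset.count_eq_zero, Multiset.count_erase_self]
      have := Multiset.nodup_iff_count_le_one.1 hnd k
      have hc : 1 ≤ Multiset.count k p.1 := Multiset.one_le_count_iff_mem.2 h1
      omega
    rw [mvA, htop, hmv]
    simp only [if_neg hnot]
    show (k ::ₘ p.1.erase k, (k ::ₘ p.2).erase k) = p
    rw [Multiset.cons_erase h1, Multiset.erase_cons_head]
  · have h2 : k ∈ p.2 := by
      rcases Multiset.mem_add.1 hk with h' | h'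
      · exact absurd h' h1
      · exact h'
    have hmv : mvA p = (k ::ₘ p.1, p.2.erase k) := by rw [mvA, if_neg h1]
    rw [mvA, htop, hmv]
    simp only [if_pos (Multiset.mem_cons_self k p.1)]
    show ((k ::ₘ p.1).erase k, k ::ₘ p.2.erase k) = p
    rw [Multiset.erase_cons_head, Multiset.cons_erase h2]


lemma double_half_sum {l : Multiset ℕ} (h : ∀ x ∈ l, ¬ Odd x) :
    2 * (l.map (fun x => x / 2)).sum = l.sum := by
  induction l using Multiset.induction with
  | empty => simp
  | cons a s ih =>
    simp only [Multiset.map_cons, Multiset.sum_cons, Nat.mul_add]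
    rw [ih (fun x hx => h x (Multiset.mem_cons_of_mem hx))]
    have ha : ¬ Odd a := h a (Multiset.mem_cons_self a s)
    rw [Nat.not_odd_iff_even] at ha
    obtain ⟨c, rfl⟩ := ha
    omega

lemma map_double_sum (l : Multiset ℕ) : (l.map (fun x => x * 2)).sum = 2 * l.sum := by
  induction l using Multiset.induction with
  | empty => simp
  | cons a s ih => simp [ih]; ring

lemma idA (n : ℕ) :
    ∑ p ∈ Q n, (-1 : ℤ) ^ (Multiset.card p.2) = if Even n then f (n / 2) else 0 := by
  rw [← Finset.sum_filter_add_sum_filter_not (Q n) (fun p => ∃ x ∈ p.1 + p.2, Odd x)]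
  have hrest : ∑ p ∈ (Q n).filter (fun p => ∃ x ∈ p.1 + p.2, Odd x),
      (-1 : ℤ) ^ (Multiset.card p.2) = 0 := by
    refine Finset.sum_involution (fun p _ => mvA p) ?_ ?_ ?_ ?_
    · intro p hp
      exact mvA_card (Finset.mem_filter.1 hp).2
    · intro p hp _
      exact mvA_ne (Finset.mem_filter.1 hp).2
    · intro p hp
      rw [Finset.mem_filter] at hp ⊢
      exact ⟨mvA_mem hp.1 hp.2, mvA_odd hp.2⟩
    · intro p hp
      have hp' := Finset.mem_filter.1 hp
      exact mvA_invol (mem_Q.1 hp'.1).1.1 hp'.2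
  rw [hrest, zero_add]
  -- characterize the fixed set
  have hfix : ∀ p ∈ (Q n).filter (fun p => ¬ ∃ x ∈ p.1 + p.2, Odd x),
      p.1 = 0 ∧ (∀ x ∈ p.2, ¬ Odd x) ∧ p.2.sum = n ∧ ∀ x ∈ p.2, 0 < x := by
    intro p hp
    rw [Finset.mem_filter] at hp
    obtain ⟨hq, hno⟩ := hp
    push_neg at hno
    obtain ⟨⟨hnd, hodd⟩, hpos, hsum⟩ := mem_Q.1 hq
    have h1 : p.1 = 0 := by
      by_contra h0
      obtain ⟨x, hx⟩ := Multiset.exists_mem_of_ne_zero h0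
      exact hno x (Multiset.mem_add.2 (Or.inl hx)) (hodd x hx)
    have h2 : ∀ x ∈ p.2, ¬ Odd x := fun x hx => hno x (Multiset.mem_add.2 (Or.inr hx))
    have hs2 : p.2.sum = n := by rw [h1] at hsum; simpa using hsum
    exact ⟨h1, h2, hs2, hpos⟩
  by_cases hev : Even n
  · rw [if_pos hev, f]
    refine Finset.sum_nbij' (fun p => p.2.map (fun x => x / 2))
      (fun l => ((0 : Multiset ℕ), l.map (fun x => x * 2))) ?_ ?_ ?_ ?_ ?_
    · intro p hp
      obtain ⟨h1, h2, hs2, hpos⟩ := hfix p hp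
      rw [mem_P]
      constructor
      · show (p.2.map (fun x => x / 2)).sum = n / 2
        have := double_half_sum h2
        omega
      · intro x hx
        obtain ⟨y, hy, rfl⟩ := Multiset.mem_map.1 hx
        have hye := h2 y hy
        have hyp := hpos y hy
        rw [Nat.not_odd_iff_even] at hye
        obtain ⟨c, rfl⟩ := hye
        omega
    · intro l hl
      rw [mem_P] at hl
      rw [Finset.mem_filter]
      constructor
      · rw [mem_Q]
        refine ⟨⟨Multiset.nodup_zero, by simp⟩, ?_, ?_⟩
        · intro x hx
          obtain ⟨y, hy, rfl⟩ := Multiset.mem_map.1 hx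
          have := hl.2 y hy
          omega
        · show (0 : Multiset ℕ).sum + (l.map (fun x => x * 2)).sum = n
          rw [map_double_sum, hl.1]
          simp only [Multiset.sum_zero, zero_add]
          obtain ⟨c, hc⟩ := hev
          omega
      · push_neg
        intro x hx
        rw [Nat.not_odd_iff_even]
        rcases Multiset.mem_add.1 hx with h' | h'
        · exact absurd h' (Multiset.notMem_zero x)
        · obtain ⟨y, hy, rfl⟩ := Multiset.mem_map.1 h'
          exact ⟨y, by ring⟩
    · intro p hp
      obtain ⟨h1, h2, hs2, hpos⟩ := hfix p hp
      show ((0 : Multiset ℕ), (p.2.map (fun x => x / 2)).map (fun x => x * 2)) = p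
      rw [Multiset.map_map]
      have hmm : (p.2.map fun x => x / 2 * 2) = p.2 := by
        refine (Multiset.map_congr rfl ?_).trans (Multiset.map_id p.2)
        intro x hx
        show x / 2 * 2 = id x
        have := h2 x hx
        rw [Nat.not_odd_iff_even] at this
        obtain ⟨c, rfl⟩ := this
        simp; omega
      show ((0 : Multiset ℕ), p.2.map (fun x => x / 2 * 2)) = p
      rw [hmm, ← h1]
    · intro l hl
      show ((l.map (fun x => x * 2)).map (fun x => x / 2)) = l
      rw [Multiset.map_map]
      refine (Multiset.map_congr rfl ?_).trans (Multiset.map_id l)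
      intro x hx
      show x * 2 / 2 = x
      omega
    · intro p hp
      show (-1 : ℤ) ^ Multiset.card p.2 = (-1) ^ Multiset.card (p.2.map fun x => x / 2)
      rw [Multiset.card_map]
  · rw [if_neg hev]
    have : (Q n).filter (fun p => ¬ ∃ x ∈ p.1 + p.2, Odd x) = ∅ := by
      rw [Finset.eq_empty_iff_forall_notMem]
      intro p hp
      obtain ⟨h1, h2, hs2, hpos⟩ := hfix p hp
      apply hev
      have := double_half_sum h2
      exact ⟨(p.2.map (fun x => x / 2)).sum, by omega⟩
    rw [this, Finset.sum_empty]

/-! ### Identity B -/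

noncomputable def Q' (n : ℕ) : Finset (Multiset ℕ × Multiset ℕ) :=
  (Finset.range (n+1)).biUnion (fun m => (DO m) ×ˢ (DO (n - m)))

lemma mem_Q' {n : ℕ} {p : Multiset ℕ × Multiset ℕ} :
    p ∈ Q' n ↔ (p.1.Nodup ∧ ∀ x ∈ p.1, Odd x) ∧ (p.2.Nodup ∧ ∀ x ∈ p.2, Odd x) ∧
      p.1.sum + p.2.sum = n := by
  simp only [Q', mem_biUnion, Finset.mem_range, Finset.mem_product, mem_DO]
  constructor
  · rintro ⟨m, hm, ⟨hs, hn, ho⟩, hl, hp, hq⟩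
    exact ⟨⟨hn, ho⟩, ⟨hp, hq⟩, by omega⟩
  · rintro ⟨⟨hn, ho⟩, ⟨hp, hq⟩, hsum⟩
    exact ⟨p.1.sum, by omega, ⟨rfl, hn, ho⟩, by omega, hp, hq⟩

lemma sum_Q' (n : ℕ) (F : Multiset ℕ → ℤ) :
    ∑ p ∈ Q' n, F p.2 = ∑ m ∈ range (n+1), ((DO m).card : ℤ) * ∑ l ∈ DO (n - m), F l := by
  rw [Q', Finset.sum_biUnion]
  · refine Finset.sum_congr rfl (fun m _ => ?_)
    rw [Finset.sum_product]
    simp [Finset.sum_const, mul_comm]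
  · intro a _ b _ hab
    simp only [Finset.disjoint_left]
    rintro p hp hq
    rw [Finset.mem_product] at hp hq
    exact hab (by rw [← (mem_DO.1 hp.1).1, (mem_DO.1 hq.1).1])

/-- symmetric difference multiset -/
def sd (p : Multiset ℕ × Multiset ℕ) : Multiset ℕ := (p.1 - p.2) + (p.2 - p.1)

lemma sd_eq_zero {p : Multiset ℕ × Multiset ℕ} (h : p.1 = p.2) : sd p = 0 := by
  simp [sd, h]

lemma sd_ne_zero {p : Multiset ℕ × Multiset ℕ} (h : p.1 ≠ p.2) : sd p ≠ 0 := by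
  intro h0
  apply h
  have hle1 : p.1 - p.2 ≤ 0 := by rw [← h0, sd]; exact Multiset.le_add_right _ _
  have hle2 : p.2 - p.1 ≤ 0 := by rw [← h0, sd]; exact Multiset.le_add_left _ _
  exact le_antisymm (tsub_eq_zero_iff_le.1 (Multiset.le_zero.1 hle1))
    (tsub_eq_zero_iff_le.1 (Multiset.le_zero.1 hle2))

lemma topSD_spec {p : Multiset ℕ × Multiset ℕ} (hn1 : p.1.Nodup) (hn2 : p.2.Nodup)
    (h : p.1 ≠ p.2) :
    (mtop (sd p) ∈ p.1 ∧ mtop (sd p) ∉ p.2) ∨ (mtop (sd p) ∈ p.2 ∧ mtop (sd p) ∉ p.1) := by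
  have hk := mtop_mem (sd_ne_zero h)
  set k := mtop (sd p)
  rw [sd, Multiset.mem_add] at hk
  rcases hk with hk | hk
  · left
    have hc := Multiset.count_pos.2 hk
    rw [Multiset.count_sub] at hc
    have h1 := Multiset.nodup_iff_count_le_one.1 hn1 k
    constructor
    · rw [← Multiset.count_pos]; omega
    · rw [← Multiset.count_eq_zero]; omega
  · right
    have hc := Multiset.count_pos.2 hk
    rw [Multiset.count_sub] at hc
    have h1 := Multiset.nodup_iff_count_le_one.1 hn2 k
    constructor
    · rw [← Multiset.count_pos]; omega
    · rw [← Multiset.count_eq_zero]; omega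

noncomputable def mvB (p : Multiset ℕ × Multiset ℕ) : Multiset ℕ × Multiset ℕ :=
  if mtop (sd p) ∈ p.1 then (p.1.erase (mtop (sd p)), mtop (sd p) ::ₘ p.2)
  else (mtop (sd p) ::ₘ p.1, p.2.erase (mtop (sd p)))

lemma topSD_cases {p : Multiset ℕ × Multiset ℕ} (hn1 : p.1.Nodup) (hn2 : p.2.Nodup)
    (h : p.1 ≠ p.2) (h1 : mtop (sd p) ∈ p.1) : mtop (sd p) ∉ p.2 := by
  rcases topSD_spec hn1 hn2 h with ⟨_, hb⟩ | ⟨_, hb⟩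
  · exact hb
  · exact absurd h1 hb

lemma topSD_cases' {p : Multiset ℕ × Multiset ℕ} (hn1 : p.1.Nodup) (hn2 : p.2.Nodup)
    (h : p.1 ≠ p.2) (h1 : mtop (sd p) ∉ p.1) : mtop (sd p) ∈ p.2 := by
  rcases topSD_spec hn1 hn2 h with ⟨ha, _⟩ | ⟨ha, _⟩
  · exact absurd ha h1
  · exact ha

lemma sd_mvB {p : Multiset ℕ × Multiset ℕ} (hn1 : p.1.Nodup) (hn2 : p.2.Nodup)
    (h : p.1 ≠ p.2) : sd (mvB p) = sd p := by
  set k := mtop (sd p) with hkdef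
  rw [mvB, ← hkdef]
  have hc1 := Multiset.nodup_iff_count_le_one.1 hn1 k
  have hc2 := Multiset.nodup_iff_count_le_one.1 hn2 k
  split_ifs with h1
  · have h2 : k ∉ p.2 := topSD_cases hn1 hn2 h h1
    have hk1 : Multiset.count k p.1 = 1 := by
      have := Multiset.one_le_count_iff_mem.2 h1; omega
    have hk2 : Multiset.count k p.2 = 0 := Multiset.count_eq_zero.2 h2
    refine Multiset.ext.2 (fun a => ?_)
    show Multiset.count a ((p.1.erase k - (k ::ₘ p.2)) + ((k ::ₘ p.2) - p.1.erase k)) = _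
    rw [sd]
    simp only [Multiset.count_add, Multiset.count_sub]
    by_cases hak : a = k
    · subst hak
      rw [Multiset.count_erase_self, Multiset.count_cons_self]
      omega
    · rw [Multiset.count_erase_of_ne hak, Multiset.count_cons_of_ne hak]
  · have h2 : k ∈ p.2 := topSD_cases' hn1 hn2 h h1
    have hk1 : Multiset.count k p.1 = 0 := Multiset.count_eq_zero.2 h1
    have hk2 : Multiset.count k p.2 = 1 := by
      have := Multiset.one_le_count_iff_mem.2 h2; omega
    refine Multiset.ext.2 (fun a => ?_)
    show Multiset.count a (((k ::ₘ p.1) - p.2.erase k) + (p.2.erase k - (k ::ₘ p.1))) = _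
    rw [sd]
    simp only [Multiset.count_add, Multiset.count_sub]
    by_cases hak : a = k
    · subst hak
      rw [Multiset.count_erase_self, Multiset.count_cons_self]
      omega
    · rw [Multiset.count_erase_of_ne hak, Multiset.count_cons_of_ne hak]

lemma mvB_ne_pair {p : Multiset ℕ × Multiset ℕ} (hn1 : p.1.Nodup) (hn2 : p.2.Nodup)
    (h : p.1 ≠ p.2) : (mvB p).1 ≠ (mvB p).2 := by
  intro heq
  have := sd_mvB hn1 hn2 h
  rw [sd_eq_zero heq] at this
  exact sd_ne_zero h this.symm

lemma mvB_mem {n : ℕ} {p : Multiset ℕ × Multiset ℕ} (hp : p ∈ Q' n)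
    (h : p.1 ≠ p.2) : mvB p ∈ Q' n := by
  obtain ⟨⟨hn1, ho1⟩, ⟨hn2, ho2⟩, hsum⟩ := mem_Q'.1 hp
  set k := mtop (sd p) with hkdef
  rw [mem_Q']
  rw [mvB]
  split_ifs with h1
  · have h2 : k ∉ p.2 := topSD_cases hn1 hn2 h h1
    have hko : Odd k := ho1 k h1
    refine ⟨⟨hn1.erase _, fun x hx => ho1 x (Multiset.mem_of_mem_erase hx)⟩,
      ⟨Multiset.nodup_cons.2 ⟨h2, hn2⟩, ?_⟩, ?_⟩
    · intro x hx
      rcases Multiset.mem_cons.1 hx with rfl | hx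
      · exact hko
      · exact ho2 x hx
    · show (p.1.erase k).sum + (k ::ₘ p.2).sum = n
      rw [Multiset.sum_cons]
      have : p.1.sum = k + (p.1.erase k).sum := by
        conv_lhs => rw [← Multiset.cons_erase h1]
        rw [Multiset.sum_cons]
      omega
  · have h2 : k ∈ p.2 := topSD_cases' hn1 hn2 h h1
    have hko : Odd k := ho2 k h2
    refine ⟨⟨Multiset.nodup_cons.2 ⟨h1, hn1⟩, ?_⟩,
      ⟨hn2.erase _, fun x hx => ho2 x (Multiset.mem_of_mem_erase hx)⟩, ?_⟩
    · intro x hx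
      rcases Multiset.mem_cons.1 hx with rfl | hx
      · exact hko
      · exact ho1 x hx
    · show (k ::ₘ p.1).sum + (p.2.erase k).sum = n
      rw [Multiset.sum_cons]
      have : p.2.sum = k + (p.2.erase k).sum := by
        conv_lhs => rw [← Multiset.cons_erase h2]
        rw [Multiset.sum_cons]
      omega

lemma mvB_card {p : Multiset ℕ × Multiset ℕ} (hn1 : p.1.Nodup) (hn2 : p.2.Nodup)
    (h : p.1 ≠ p.2) :
    (-1 : ℤ) ^ (Multiset.card p.2) + (-1) ^ (Multiset.card (mvB p).2) = 0 := by
  set k := mtop (sd p) with hkdef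
  rw [mvB, ← hkdef]
  split_ifs with h1
  · show (-1 : ℤ) ^ (Multiset.card p.2) + (-1) ^ (Multiset.card (k ::ₘ p.2)) = 0
    rw [Multiset.card_cons, pow_succ]; ring
  · have h2 : k ∈ p.2 := topSD_cases' hn1 hn2 h h1
    show (-1 : ℤ) ^ (Multiset.card p.2) + (-1) ^ (Multiset.card (p.2.erase k)) = 0
    have hrw : p.2 = k ::ₘ p.2.erase k := (Multiset.cons_erase h2).symm
    rw [hrw, Multiset.erase_cons_head, Multiset.card_cons, pow_succ]; ring

lemma mvB_ne {p : Multiset ℕ × Multiset ℕ} (hn1 : p.1.Nodup) (hn2 : p.2.Nodup)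
    (h : p.1 ≠ p.2) : mvB p ≠ p := by
  intro heq
  have hc := mvB_card hn1 hn2 h
  rw [heq] at hc
  rcases neg_one_pow_eq_or ℤ (Multiset.card p.2) with h' | h' <;>
    rw [h'] at hc <;> norm_num at hc

lemma mvB_invol {p : Multiset ℕ × Multiset ℕ} (hn1 : p.1.Nodup) (hn2 : p.2.Nodup)
    (h : p.1 ≠ p.2) : mvB (mvB p) = p := by
  set k := mtop (sd p) with hkdef
  have htop : mtop (sd (mvB p)) = k := by rw [sd_mvB hn1 hn2 h]
  rcases Classical.em (k ∈ p.1) with h1 | h1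
  · have h2 : k ∉ p.2 := topSD_cases hn1 hn2 h h1
    have hmv : mvB p = (p.1.erase k, k ::ₘ p.2) := by rw [mvB, if_pos h1]
    have hnot : k ∉ p.1.erase k := by
      rw [← Multiset.count_eq_zero, Multiset.count_erase_self]
      have := Multiset.nodup_iff_count_le_one.1 hn1 k
      have hc : 1 ≤ Multiset.count k p.1 := Multiset.one_le_count_iff_mem.2 h1
      omega
    rw [mvB, htop, hmv]
    simp only [if_neg hnot]
    show (k ::ₘ p.1.erase k, (k ::ₘ p.2).erase k) = p
    rw [Multiset.cons_erase h1, Multiset.erase_cons_head]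
  · have h2 : k ∈ p.2 := topSD_cases' hn1 hn2 h h1
    have hmv : mvB p = (k ::ₘ p.1, p.2.erase k) := by rw [mvB, if_neg h1]
    rw [mvB, htop, hmv]
    simp only [if_pos (Multiset.mem_cons_self k p.1)]
    show ((k ::ₘ p.1).erase k, k ::ₘ p.2.erase k) = p
    rw [Multiset.erase_cons_head, Multiset.cons_erase h2]

lemma idB (n : ℕ) :
    ∑ p ∈ Q' n, (-1 : ℤ) ^ (Multiset.card p.2) = if Even n then g (n / 2) else 0 := by
  rw [← Finset.sum_filter_add_sum_filter_not (Q' n) (fun p => p.1 ≠ p.2)]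
  have hrest : ∑ p ∈ (Q' n).filter (fun p => p.1 ≠ p.2),
      (-1 : ℤ) ^ (Multiset.card p.2) = 0 := by
    refine Finset.sum_involution (fun p _ => mvB p) ?_ ?_ ?_ ?_
    · intro p hp
      obtain ⟨hq, hne⟩ := Finset.mem_filter.1 hp
      obtain ⟨⟨hn1, _⟩, ⟨hn2, _⟩, _⟩ := mem_Q'.1 hq
      exact mvB_card hn1 hn2 hne
    · intro p hp _
      obtain ⟨hq, hne⟩ := Finset.mem_filter.1 hp
      obtain ⟨⟨hn1, _⟩, ⟨hn2, _⟩, _⟩ := mem_Q'.1 hq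
      exact mvB_ne hn1 hn2 hne
    · intro p hp
      obtain ⟨hq, hne⟩ := Finset.mem_filter.1 hp
      obtain ⟨⟨hn1, _⟩, ⟨hn2, _⟩, _⟩ := mem_Q'.1 hq
      exact Finset.mem_filter.2 ⟨mvB_mem hq hne, mvB_ne_pair hn1 hn2 hne⟩
    · intro p hp
      obtain ⟨hq, hne⟩ := Finset.mem_filter.1 hp
      obtain ⟨⟨hn1, _⟩, ⟨hn2, _⟩, _⟩ := mem_Q'.1 hq
      exact mvB_invol hn1 hn2 hne
  rw [hrest, zero_add]
  have hfix : ∀ p ∈ (Q' n).filter (fun p => ¬ p.1 ≠ p.2),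
      p.1 = p.2 ∧ p.2.Nodup ∧ (∀ x ∈ p.2, Odd x) ∧ 2 * p.2.sum = n := by
    intro p hp
    rw [Finset.mem_filter, not_not] at hp
    obtain ⟨hq, heq⟩ := hp
    obtain ⟨_, ⟨hn2, ho2⟩, hsum⟩ := mem_Q'.1 hq
    rw [heq] at hsum
    exact ⟨heq, hn2, ho2, by omega⟩
  by_cases hev : Even n
  · rw [if_pos hev, g]
    refine Finset.sum_nbij' (fun p => p.2) (fun l => (l, l)) ?_ ?_ ?_ ?_ ?_
    · intro p hp
      obtain ⟨heq, hn2, ho2, hs⟩ := hfix p hp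
      refine mem_DO.2 ⟨?_, hn2, ho2⟩
      show p.2.sum = n / 2
      omega
    · intro l hl
      obtain ⟨hs, hn2, ho2⟩ := mem_DO.1 hl
      rw [Finset.mem_filter, not_not]
      refine ⟨mem_Q'.2 ⟨⟨hn2, ho2⟩, ⟨hn2, ho2⟩, ?_⟩, rfl⟩
      show l.sum + l.sum = n
      obtain ⟨c, hc⟩ := hev
      omega
    · intro p hp
      obtain ⟨heq, _, _, _⟩ := hfix p hp
      show ((p.2 : Multiset ℕ), p.2) = (p.1, p.2)
      rw [heq]
    · intro l _
      rfl
    · intro p _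
      rfl
  · rw [if_neg hev]
    have : (Q' n).filter (fun p => ¬ p.1 ≠ p.2) = ∅ := by
      rw [Finset.eq_empty_iff_forall_notMem]
      intro p hp
      obtain ⟨_, _, _, hs⟩ := hfix p hp
      exact hev ⟨p.2.sum, by omega⟩
    rw [this, Finset.sum_empty]

/-! ### recurrences and induction -/

lemma recA (n : ℕ) :
    ∑ m ∈ range (n+1), ((DO m).card : ℤ) * f (n - m) = if Even n then f (n / 2) else 0 := by
  rw [← idA n, sum_Q n (fun l => (-1) ^ (Multiset.card l))]
  rfl

lemma recB (n : ℕ) :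
    ∑ m ∈ range (n+1), ((DO m).card : ℤ) * g (n - m) = if Even n then g (n / 2) else 0 := by
  rw [← idB n, sum_Q' n (fun l => (-1) ^ (Multiset.card l))]
  rfl

lemma P_zero : P 0 = {0} := by
  ext s
  rw [mem_P, Finset.mem_singleton]
  constructor
  · rintro ⟨h1, h2⟩
    rw [Multiset.eq_zero_iff_forall_notMem]
    intro x hx
    have := h2 x hx
    have := Multiset.single_le_sum (fun y hy => Nat.zero_le y) x hx
    omega
  · rintro rfl
    simp
  
lemma DO_zero : DO 0 = {0} := by
  ext s
  rw [mem_DO, Finset.mem_singleton]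
  constructor
  · rintro ⟨h1, h2, h3⟩
    rw [Multiset.eq_zero_iff_forall_notMem]
    intro x hx
    have := (h3 x hx).pos
    have := Multiset.single_le_sum (fun y hy => Nat.zero_le y) x hx
    omega
  · rintro rfl
    simp [isDO]

lemma f_eq_g : ∀ n, f n = g n := by
  intro n
  induction n using Nat.strong_induction_on with
  | _ n ih =>
    rcases Nat.eq_zero_or_pos n with rfl | hn
    · rw [f, g, P_zero, DO_zero]
    · have hA := recA n
      have hB := recB n
      rw [Finset.sum_range_succ'] at hA hB
      have hDO0 : ((DO 0).card : ℤ) = 1 := by rw [DO_zero]; simp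
      rw [hDO0, one_mul, Nat.sub_zero] at hA hB
      have hhalf : f (n / 2) = g (n / 2) := ih _ (by omega)
      have hterm : ∀ m ∈ range n, ((DO (m+1)).card : ℤ) * f (n - (m+1)) =
          ((DO (m+1)).card : ℤ) * g (n - (m+1)) := by
        intro m hm
        rw [ih (n - (m+1)) (by omega)]
      rw [Finset.sum_congr rfl hterm] at hA
      by_cases hev : Even n
      · rw [if_pos hev] at hA hB
        rw [hhalf] at hA
        omega
      · rw [if_neg hev] at hA hB
        omega

lemma odd_card_pow {l : Multiset ℕ} (h : ∀ x ∈ l, Odd x) :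
    (-1 : ℤ) ^ (Multiset.card l) = (-1) ^ l.sum := by
  induction l using Multiset.induction with
  | empty => simp
  | cons a s ih =>
    rw [Multiset.card_cons, Multiset.sum_cons, pow_succ, pow_add,
      ih (fun x hx => h x (Multiset.mem_cons_of_mem hx)),
      (h a (Multiset.mem_cons_self a s)).neg_one_pow]
    ring

end DOP

open scoped Classical in
/-- `∑_{λ ⊢ n} (-1)^{n+ℓ(λ)}` equals the number of partitions of `n` into pairwise distinct
odd parts, i.e. the value `A_n(-1)` of `A_n(q) = ∑_{λ ⊢ n} q^{n+ℓ(λ)}` at `q = -1`. -/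
theorem sum_neg_one_pow_eq_card_distinct_odd_partitions (n : ℕ) (hn : 1 ≤ n) :
    (∑ lam : Nat.Partition n, (-1 : ℤ) ^ (n + lam.parts.card)) =
      ((Finset.univ.filter fun lam : Nat.Partition n =>
          (∀ x ∈ lam.parts, Odd x) ∧ lam.parts.Nodup).card : ℤ) := by
  classical
  have hinj : Function.Injective (fun p : Nat.Partition n => p.parts) :=
    fun p q h => Nat.Partition.ext h
  -- LHS in terms of f
  have h1 : (∑ lam : Nat.Partition n, (-1 : ℤ) ^ (n + lam.parts.card)) =
      (-1) ^ n * DOP.f n := by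
    rw [DOP.f, DOP.P, Finset.sum_image (fun x _ y _ h => hinj h), Finset.mul_sum]
    refine Finset.sum_congr rfl (fun p _ => ?_)
    rw [pow_add]
  -- RHS in terms of DO
  have h2 : DOP.DO n = Finset.image (fun p : Nat.Partition n => p.parts)
      (Finset.univ.filter fun lam : Nat.Partition n =>
        (∀ x ∈ lam.parts, Odd x) ∧ lam.parts.Nodup) := by
    ext s
    rw [DOP.mem_DO, Finset.mem_image]
    constructor
    · rintro ⟨hs, hnd, hodd⟩
      exact ⟨⟨s, fun hx => (hodd _ hx).pos, hs⟩,
        Finset.mem_filter.2 ⟨Finset.mem_univ _, hodd, hnd⟩, rfl⟩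
    · rintro ⟨p, hp, rfl⟩
      obtain ⟨-, hodd, hnd⟩ := Finset.mem_filter.1 hp
      exact ⟨p.parts_sum, hnd, hodd⟩
  have hcard : ((Finset.univ.filter fun lam : Nat.Partition n =>
      (∀ x ∈ lam.parts, Odd x) ∧ lam.parts.Nodup).card : ℤ) = ((DOP.DO n).card : ℤ) := by
    rw [h2, Finset.card_image_of_injective _ hinj]
  -- g n = card * (-1)^n
  have h3 : DOP.g n = ((DOP.DO n).card : ℤ) * (-1) ^ n := by
    rw [DOP.g]
    rw [Finset.sum_congr rfl (fun l hl => ?_), Finset.sum_const, nsmul_eq_mul]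
    obtain ⟨hs, hnd, hodd⟩ := DOP.mem_DO.1 hl
    rw [DOP.odd_card_pow hodd, hs]
  rw [h1, DOP.f_eq_g n, h3, hcard]
  have : (-1 : ℤ) ^ n * (-1) ^ n = 1 := by
    rw [← pow_add]
    exact Even.neg_one_pow ⟨n, rfl⟩
  ring_nf
  ring_nf at this
  nlinarith [this]
end

section
/- For all integers n ≥ 1 and i ≥ 0, the number of divisors d of n satisfying (i + √(2n+i²))/2 < d ≤ i + √(2n+i²) equals Σ (−1)^{k−1}, where the sum is over all pairs of positive integers (k,m) with km = 2n, k < m, k and m of different parity, and m − k ≥ 2i + 1. -/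
open scoped Classical in
/-- `a_{n,i}` is the number of divisors `d` of `n` with
`(i + √(2n+i²))/2 < d ≤ i + √(2n+i²)`. -/
noncomputable def aCoeff (n i : ℕ) : ℕ :=
  (n.divisors.filter fun d =>
    ((i : ℝ) + Real.sqrt (2 * n + i ^ 2)) / 2 < (d : ℝ) ∧
      (d : ℝ) ≤ (i : ℝ) + Real.sqrt (2 * n + i ^ 2)).card

open scoped Classical

namespace ACoeffAux

/-- The threshold `R = i + √(2n+i²)`. -/
noncomputable def R (n i : ℕ) : ℝ := (i : ℝ) + Real.sqrt (2 * n + i ^ 2)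

lemma R_nonneg (n i : ℕ) : 0 ≤ R n i :=
  add_nonneg (Nat.cast_nonneg i) (Real.sqrt_nonneg _)


lemma R_lt_iff (n i : ℕ) (hn : 1 ≤ n) (m : ℕ) :
    R n i < m ↔ 2 * n + 2 * i * m < m * m := by
  have h2 : (0:ℝ) ≤ 2 * (n:ℝ) + (i:ℝ) ^ 2 := by positivity
  constructor
  · intro h
    have hi : (i:ℝ) ≤ R n i := by
      have := Real.sqrt_nonneg (2 * (n:ℝ) + (i:ℝ) ^ 2); unfold R; linarith
    have him : (i:ℝ) < m := lt_of_le_of_lt hi h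
    have hs : Real.sqrt (2 * (n:ℝ) + (i:ℝ) ^ 2) < (m:ℝ) - i := by unfold R at h; linarith
    have h3 := (Real.sqrt_lt' (by linarith : (0:ℝ) < (m:ℝ) - i)).mp hs
    have h4 : (2*(n:ℝ) + 2*(i:ℝ)*(m:ℝ) : ℝ) < (m:ℝ)*(m:ℝ) := by nlinarith
    exact_mod_cast h4
  · intro h
    have h' : (2*(n:ℝ) + 2*(i:ℝ)*(m:ℝ) : ℝ) < (m:ℝ)*(m:ℝ) := by exact_mod_cast h
    have hn' : (1:ℝ) ≤ n := by exact_mod_cast hn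
    have hm : (0:ℝ) < m := by
      rcases Nat.eq_zero_or_pos m with h0 | h0
      · subst h0; simp at h'; nlinarith
      · exact_mod_cast h0
    have hi : (i:ℝ) < m := by nlinarith
    have hs : Real.sqrt (2 * (n:ℝ) + (i:ℝ) ^ 2) < (m:ℝ) - i :=
      (Real.sqrt_lt' (by linarith)).mpr (by nlinarith)
    unfold R; linarith

lemma cond_iff (n i : ℕ) (hn : 1 ≤ n) {k m : ℕ} (hkm : k * m = 2 * n) (hk : k < m) :
    2 * i + 1 ≤ m - k ↔ R n i < m := by
  rw [R_lt_iff n i hn m]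
  have hm : 0 < m := by omega
  constructor
  · intro h
    have h1 : k + 2 * i < m := by omega
    calc 2 * n + 2 * i * m = k * m + 2 * i * m := by rw [hkm]
      _ = (k + 2 * i) * m := by ring
      _ < m * m := by exact Nat.mul_lt_mul_of_lt_of_le h1 le_rfl (by omega)
  · intro h
    have h1 : (k + 2 * i) * m < m * m := by
      rw [Nat.add_mul, hkm]; exact h
    have h2 : k + 2 * i < m := lt_of_mul_lt_mul_right h1 (Nat.zero_le m)
    omega

lemma div_lt_of_R_lt (n i : ℕ) (hn : 1 ≤ n) {m : ℕ} (hm : m ∣ 2 * n)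
    (h : R n i < m) : 2 * n / m < m := by
  rw [R_lt_iff n i hn m] at h
  have hm0 : 0 < m := by
    rcases Nat.eq_zero_or_pos m with h0 | h0
    · subst h0; simp at h
    · exact h0
  have h2 : (2 * n / m) * m < m * m := by
    calc (2 * n / m) * m = 2 * n := Nat.div_mul_cancel hm
      _ ≤ 2 * n + 2 * i * m := Nat.le_add_right _ _
      _ < m * m := h
  exact lt_of_mul_lt_mul_right h2 (Nat.zero_le m)



lemma fact2_mul_pow {e : ℕ} (b : ℕ) (he : e % 2 = 1) :
    (2 ^ b * e).factorization 2 = b ∧ ordCompl[2] (2 ^ b * e) = e := by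
  have he' : ¬ 2 ∣ e := by omega
  have he0 : e ≠ 0 := by omega
  have h1 : (2 ^ b * e).factorization 2 = b := by
    rw [Nat.factorization_mul (pow_ne_zero _ two_ne_zero) he0]
    simp [Nat.Prime.factorization_pow Nat.prime_two,
      Nat.factorization_eq_zero_of_not_dvd he']
  refine ⟨h1, ?_⟩
  rw [h1]
  exact Nat.mul_div_cancel_left e (Nat.pow_pos (n := b) (by norm_num))

lemma fact2_of_odd_codiv {N m : ℕ} (hN : N ≠ 0) (hm : m ∣ N) (hodd : (N / m) % 2 = 1) :
    m.factorization 2 = N.factorization 2 := by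
  have hm0 : m ≠ 0 := by rintro rfl; simp at hm; omega
  have hq0 : N / m ≠ 0 := by omega
  have hmul : m * (N / m) = N := Nat.mul_div_cancel' hm
  have key : N.factorization 2 = m.factorization 2 + (N / m).factorization 2 := by
    conv_lhs => rw [← hmul]
    rw [Nat.factorization_mul hm0 hq0]; simp
  have hz : (N / m).factorization 2 = 0 :=
    Nat.factorization_eq_zero_of_not_dvd (by omega)
  omega

lemma ord_compl_odd {m : ℕ} (hm : m ≠ 0) : (ordCompl[2] m) % 2 = 1 := by
  have h1 := Nat.not_dvd_ordCompl Nat.prime_two hm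
  have h0 := Nat.ordCompl_pos 2 hm
  omega

lemma odd_dvd_half {n e : ℕ} (he : e % 2 = 1) (hd : e ∣ 2 * n) : e ∣ n := by
  have hc : Nat.Coprime e 2 := by
    rw [Nat.coprime_comm]
    exact (Nat.Prime.coprime_iff_not_dvd Nat.prime_two).mpr (by omega)
  exact Nat.Coprime.dvd_of_dvd_mul_left hc hd

lemma mul_pow_dvd {n e b : ℕ} (he : e % 2 = 1) (hd : e ∣ n)
    (hb : b ≤ n.factorization 2) : 2 ^ b * e ∣ n := by
  have hc : Nat.Coprime (2 ^ b) e := Nat.Coprime.pow_left _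
    ((Nat.Prime.coprime_iff_not_dvd Nat.prime_two).mpr (by omega))
  refine Nat.Coprime.mul_dvd_of_dvd_of_dvd hc ?_ hd
  exact dvd_trans (pow_dvd_pow 2 hb) (Nat.ordProj_dvd n 2)

lemma fact2_two_mul {n : ℕ} (hn : n ≠ 0) :
    (2 * n).factorization 2 = n.factorization 2 + 1 := by
  rw [Nat.factorization_mul two_ne_zero hn]
  simp [Nat.Prime.factorization_self Nat.prime_two, Nat.add_comm]

lemma fact2_le_of_dvd {d n : ℕ} (hn : n ≠ 0) (hd : d ∣ n) :
    d.factorization 2 ≤ n.factorization 2 := by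
  have hd0 : d ≠ 0 := by rintro rfl; simp at hd; exact hn hd
  exact (Nat.factorization_le_iff_dvd hd0 hn).mpr hd 2

lemma codiv_odd_of_odd {n e : ℕ} (hn : n ≠ 0) (he : e % 2 = 1) (hd : e ∣ 2 * n) :
    2 ^ ((2*n).factorization 2) * e ∣ 2 * n ∧
      ((2 * n) / (2 ^ ((2*n).factorization 2) * e)) % 2 = 1 := by
  have hN : (2:ℕ) * n ≠ 0 := by positivity
  have hc : Nat.Coprime (2 ^ ((2*n).factorization 2)) e := Nat.Coprime.pow_left _
    ((Nat.Prime.coprime_iff_not_dvd Nat.prime_two).mpr (by omega))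
  have hdvd : 2 ^ ((2*n).factorization 2) * e ∣ 2 * n :=
    Nat.Coprime.mul_dvd_of_dvd_of_dvd hc (Nat.ordProj_dvd _ 2) hd
  refine ⟨hdvd, ?_⟩
  set c := (2 * n) / (2 ^ ((2*n).factorization 2) * e) with hc'
  have hmul : (2 ^ ((2*n).factorization 2) * e) * c = 2 * n := Nat.mul_div_cancel' hdvd
  have hec : e * c = ordCompl[2] (2 * n) := by
    have h1 : 2 ^ ((2*n).factorization 2) * (e * c) = 2 * n := by
      rw [← mul_assoc]; exact hmul
    have h2 : 2 ^ ((2*n).factorization 2) * ordCompl[2] (2*n) = 2 * n :=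
      Nat.ordProj_mul_ordCompl_eq_self (2*n) 2
    exact Nat.eq_of_mul_eq_mul_left (Nat.pow_pos (by norm_num))
      (h1.trans h2.symm)
  have hoc : (e * c) % 2 = 1 := by rw [hec]; exact ord_compl_odd hN
  rcases Nat.even_or_odd c with hce | hco
  · exfalso
    have h2c : 2 ∣ e * c := Dvd.dvd.mul_left (even_iff_two_dvd.mp hce) e
    omega
  · exact Nat.odd_iff.mp hco





lemma card_main (n i : ℕ) (hn : 1 ≤ n) :
    (n.divisors.filter fun d : ℕ => R n i / 2 < (d:ℝ) ∧ (d:ℝ) ≤ R n i).card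
      + ((2*n).divisors.filter fun m : ℕ => m % 2 = 1 ∧ R n i < (m:ℝ)).card
    = ((2*n).divisors.filter fun m : ℕ => ((2*n)/m) % 2 = 1 ∧ R n i < (m:ℝ)).card := by
  have hn0 : n ≠ 0 := by omega
  have hN0 : 2 * n ≠ 0 := by omega
  set a1 := (2*n).factorization 2 with ha1
  have ha1n : a1 = n.factorization 2 + 1 := fact2_two_mul hn0
  set Mp := ((2*n).divisors.filter fun m : ℕ => ((2*n)/m) % 2 = 1 ∧ R n i < (m:ℝ)) with hMp
  -- basic facts about members of Mp
  have memMp : ∀ m ∈ Mp, m ∣ 2*n ∧ ((2*n)/m) % 2 = 1 ∧ R n i < (m:ℝ) ∧ m ≠ 0 ∧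
      m.factorization 2 = a1 ∧ 2 ^ a1 * ordCompl[2] m = m ∧ (ordCompl[2] m) % 2 = 1 := by
    intro m hm
    rw [hMp, Finset.mem_filter, Nat.mem_divisors] at hm
    obtain ⟨⟨hdvd, -⟩, hodd, hR⟩ := hm
    have hm0 : m ≠ 0 := by rintro rfl; simp at hodd
    have hf : m.factorization 2 = a1 := fact2_of_odd_codiv hN0 hdvd hodd
    refine ⟨hdvd, hodd, hR, hm0, hf, ?_, ord_compl_odd hm0⟩
    rw [← hf]; exact Nat.ordProj_mul_ordCompl_eq_self m 2
  rw [← Finset.card_filter_add_card_filter_not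
    (s := Mp) (p := fun m => ((ordCompl[2] m : ℕ) : ℝ) ≤ R n i)]
  congr 1
  · -- |L| = |M1|
    refine Finset.card_bij' (fun d _ => 2 ^ a1 * ordCompl[2] d)
      (fun m _ => 2 ^ (Nat.findGreatest
          (fun b => ((2 ^ b * ordCompl[2] m : ℕ) : ℝ) ≤ R n i) a1) * ordCompl[2] m)
      ?_ ?_ ?_ ?_
    · -- maps into M1
      intro d hd
      rw [Finset.mem_filter, Nat.mem_divisors] at hd
      obtain ⟨⟨hdvd, -⟩, hhalf, hle⟩ := hd
      have hd0 : d ≠ 0 := by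
        rintro rfl
        have := R_nonneg n i
        simp at hhalf
        linarith
      have hodd_e : (ordCompl[2] d) % 2 = 1 := ord_compl_odd hd0
      have hed : 2 ^ (d.factorization 2) * ordCompl[2] d = d :=
        Nat.ordProj_mul_ordCompl_eq_self d 2
      have hb : d.factorization 2 ≤ n.factorization 2 := fact2_le_of_dvd hn0 hdvd
      have heN : ordCompl[2] d ∣ 2 * n :=
        dvd_trans (Nat.ordCompl_dvd d 2) (dvd_trans hdvd (dvd_mul_left n 2))
      obtain ⟨hdvd2, hodd2⟩ := codiv_odd_of_odd hn0 hodd_e heN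
      have heqc : ordCompl[2] (2 ^ a1 * ordCompl[2] d) = ordCompl[2] d :=
        (fact2_mul_pow a1 hodd_e).2
      have hstep : 2 ^ (d.factorization 2 + 1) * ordCompl[2] d = 2 * d := by
        rw [pow_succ, mul_comm (2 ^ d.factorization 2) 2, mul_assoc, hed]
      have hnat : 2 * d ≤ 2 ^ a1 * ordCompl[2] d := by
        rw [← hstep]
        exact Nat.mul_le_mul_right _ (Nat.pow_le_pow_right (by norm_num) (by omega))
      have hR2 : R n i < ((2 ^ a1 * ordCompl[2] d : ℕ) : ℝ) := by
        have h2d : R n i < ((2 * d : ℕ) : ℝ) := by push_cast; linarith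
        exact lt_of_lt_of_le h2d (by exact_mod_cast hnat)
      have heled : ordCompl[2] d ≤ d :=
        Nat.le_of_dvd (Nat.pos_of_ne_zero hd0) (Nat.ordCompl_dvd d 2)
      rw [Finset.mem_filter]
      constructor
      · rw [hMp, Finset.mem_filter, Nat.mem_divisors]
        exact ⟨⟨hdvd2, hN0⟩, hodd2, hR2⟩
      · rw [heqc]
        calc ((ordCompl[2] d : ℕ) : ℝ) ≤ (d:ℝ) := by exact_mod_cast heled
          _ ≤ R n i := hle
    · -- inverse maps into L
      intro m hm
      rw [Finset.mem_filter] at hm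
      obtain ⟨hmMp, hq⟩ := hm
      obtain ⟨hdvd, hodd, hR, hm0, hf, hself, hoc⟩ := memMp m hmMp
      have hP0 : ((2 ^ 0 * ordCompl[2] m : ℕ) : ℝ) ≤ R n i := by
        simpa using hq
      have hspec : ((2 ^ (Nat.findGreatest
          (fun b => ((2 ^ b * ordCompl[2] m : ℕ) : ℝ) ≤ R n i) a1) * ordCompl[2] m : ℕ) : ℝ)
          ≤ R n i :=
        Nat.findGreatest_spec (P := fun b => ((2 ^ b * ordCompl[2] m : ℕ) : ℝ) ≤ R n i)
          (Nat.zero_le a1) hP0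
      have hfle : Nat.findGreatest
          (fun b => ((2 ^ b * ordCompl[2] m : ℕ) : ℝ) ≤ R n i) a1 ≤ a1 :=
        Nat.findGreatest_le a1
      have hlt : Nat.findGreatest
          (fun b => ((2 ^ b * ordCompl[2] m : ℕ) : ℝ) ≤ R n i) a1 < a1 := by
        rcases lt_or_eq_of_le hfle with h | h
        · exact h
        · exfalso
          rw [h, hself] at hspec
          exact absurd hspec (not_le.mpr hR)
      have hble : Nat.findGreatest
          (fun b => ((2 ^ b * ordCompl[2] m : ℕ) : ℝ) ≤ R n i) a1 ≤ n.factorization 2 :=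
        Nat.lt_succ_iff.mp (ha1n ▸ hlt)
      have hdn : 2 ^ (Nat.findGreatest
          (fun b => ((2 ^ b * ordCompl[2] m : ℕ) : ℝ) ≤ R n i) a1) * ordCompl[2] m ∣ n :=
        mul_pow_dvd (n := n) (e := ordCompl[2] m) (b := Nat.findGreatest
            (fun b => ((2 ^ b * ordCompl[2] m : ℕ) : ℝ) ≤ R n i) a1)
          hoc (odd_dvd_half hoc (dvd_trans (Nat.ordCompl_dvd m 2) hdvd)) hble
      have hgr : ¬ ((2 ^ (Nat.findGreatest
          (fun b => ((2 ^ b * ordCompl[2] m : ℕ) : ℝ) ≤ R n i) a1 + 1) * ordCompl[2] m : ℕ) : ℝ)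
          ≤ R n i :=
        Nat.findGreatest_is_greatest
          (P := fun b => ((2 ^ b * ordCompl[2] m : ℕ) : ℝ) ≤ R n i) (n := a1)
          (Nat.lt_succ_self _) (by omega)
      rw [Finset.mem_filter, Nat.mem_divisors]
      refine ⟨⟨hdn, hn0⟩, ?_, hspec⟩
      have hgt : R n i < ((2 ^ (Nat.findGreatest
          (fun b => ((2 ^ b * ordCompl[2] m : ℕ) : ℝ) ≤ R n i) a1 + 1) * ordCompl[2] m : ℕ) : ℝ) :=
        not_le.mp hgr
      have h2 : ((2 ^ (Nat.findGreatest
          (fun b => ((2 ^ b * ordCompl[2] m : ℕ) : ℝ) ≤ R n i) a1 + 1) * ordCompl[2] m : ℕ) : ℝ)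
          = 2 * ((2 ^ (Nat.findGreatest
          (fun b => ((2 ^ b * ordCompl[2] m : ℕ) : ℝ) ≤ R n i) a1) * ordCompl[2] m : ℕ) : ℝ) := by
        push_cast; ring
      rw [h2] at hgt
      linarith
    · -- left inverse
      intro d hd
      rw [Finset.mem_filter, Nat.mem_divisors] at hd
      obtain ⟨⟨hdvd, -⟩, hhalf, hle⟩ := hd
      have hd0 : d ≠ 0 := by
        rintro rfl
        have := R_nonneg n i
        simp at hhalf
        linarith
      have hodd_e : (ordCompl[2] d) % 2 = 1 := ord_compl_odd hd0
      have heqc : ordCompl[2] (2 ^ a1 * ordCompl[2] d) = ordCompl[2] d :=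
        (fact2_mul_pow a1 hodd_e).2
      simp only [heqc]
      have hed : 2 ^ (d.factorization 2) * ordCompl[2] d = d :=
        Nat.ordProj_mul_ordCompl_eq_self d 2
      have hb : d.factorization 2 ≤ n.factorization 2 := fact2_le_of_dvd hn0 hdvd
      have hPb : ((2 ^ (d.factorization 2) * ordCompl[2] d : ℕ) : ℝ) ≤ R n i := by
        rw [hed]; exact hle
      have hge : d.factorization 2 ≤ Nat.findGreatest
          (fun b => ((2 ^ b * ordCompl[2] d : ℕ) : ℝ) ≤ R n i) a1 :=
        Nat.le_findGreatest (by omega) hPb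
      have hkey : Nat.findGreatest
          (fun b => ((2 ^ b * ordCompl[2] d : ℕ) : ℝ) ≤ R n i) a1 = d.factorization 2 := by
        by_contra hne
        have hgt : d.factorization 2 < Nat.findGreatest
            (fun b => ((2 ^ b * ordCompl[2] d : ℕ) : ℝ) ≤ R n i) a1 :=
          lt_of_le_of_ne hge (fun h => hne h.symm)
        have hspec2 : ((2 ^ (Nat.findGreatest
            (fun b => ((2 ^ b * ordCompl[2] d : ℕ) : ℝ) ≤ R n i) a1) * ordCompl[2] d : ℕ) : ℝ)
            ≤ R n i :=
          Nat.findGreatest_spec (P := fun b => ((2 ^ b * ordCompl[2] d : ℕ) : ℝ) ≤ R n i)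
            (show d.factorization 2 ≤ a1 by omega) hPb
        have hmono : 2 ^ (d.factorization 2 + 1) * ordCompl[2] d
            ≤ 2 ^ (Nat.findGreatest
            (fun b => ((2 ^ b * ordCompl[2] d : ℕ) : ℝ) ≤ R n i) a1) * ordCompl[2] d :=
          Nat.mul_le_mul_right _ (Nat.pow_le_pow_right (by norm_num) (by omega))
        have h1 : 2 ^ (d.factorization 2 + 1) * ordCompl[2] d = 2 * d := by
          rw [pow_succ, mul_comm (2 ^ d.factorization 2) 2, mul_assoc, hed]
        have hc1 : (2 * d : ℕ) ≤ 2 ^ (Nat.findGreatest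
            (fun b => ((2 ^ b * ordCompl[2] d : ℕ) : ℝ) ≤ R n i) a1) * ordCompl[2] d := by
          rw [← h1]; exact hmono
        have h2d : ((2 * d : ℕ) : ℝ) ≤ R n i :=
          le_trans (by exact_mod_cast hc1) hspec2
        push_cast at h2d
        linarith
      rw [hkey, hed]
    · -- right inverse
      intro m hm
      rw [Finset.mem_filter] at hm
      obtain ⟨hmMp, hq⟩ := hm
      obtain ⟨hdvd, hodd, hR, hm0, hf, hself, hoc⟩ := memMp m hmMp
      show 2 ^ a1 * ordCompl[2] (2 ^ (Nat.findGreatest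
          (fun b => ((2 ^ b * ordCompl[2] m : ℕ) : ℝ) ≤ R n i) a1) * ordCompl[2] m) = m
      rw [(fact2_mul_pow _ hoc).2]
      exact hself
  · -- |M⁻| = |M2|
    refine Finset.card_bij' (fun e _ => 2 ^ a1 * e) (fun m _ => ordCompl[2] m)
      ?_ ?_ ?_ ?_
    · -- maps into M2
      intro e he
      rw [Finset.mem_filter, Nat.mem_divisors] at he
      obtain ⟨⟨hdvd, -⟩, hodd, hR⟩ := he
      obtain ⟨hdvd2, hodd2⟩ := codiv_odd_of_odd hn0 hodd hdvd
      have heq : ordCompl[2] (2 ^ a1 * e) = e := (fact2_mul_pow a1 hodd).2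
      have hle : (e : ℝ) ≤ ((2 ^ a1 * e : ℕ) : ℝ) := by
        have : e ≤ 2 ^ a1 * e := Nat.le_mul_of_pos_left e (Nat.pow_pos (by norm_num))
        exact_mod_cast this
      rw [Finset.mem_filter, Finset.mem_filter, Nat.mem_divisors]
      exact ⟨⟨⟨hdvd2, hN0⟩, hodd2, lt_of_lt_of_le hR hle⟩, by rw [heq]; exact not_le.mpr hR⟩
    · -- inverse maps into M⁻
      intro m hm
      rw [Finset.mem_filter] at hm
      obtain ⟨hmMp, hq⟩ := hm
      obtain ⟨hdvd, hodd, hR, hm0, hf, hself, hoc⟩ := memMp m hmMp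
      rw [Finset.mem_filter, Nat.mem_divisors]
      exact ⟨⟨dvd_trans (Nat.ordCompl_dvd m 2) hdvd, hN0⟩, hoc, not_le.mp hq⟩
    · -- left inverse
      intro e he
      rw [Finset.mem_filter, Nat.mem_divisors] at he
      exact (fact2_mul_pow a1 he.2.1).2
    · -- right inverse
      intro m hm
      rw [Finset.mem_filter] at hm
      exact (memMp m hm.1).2.2.2.2.2.1





lemma sum_eq (n i : ℕ) (hn : 1 ≤ n) :
    ∑ p ∈ (Nat.divisorsAntidiagonal (2 * n)).filter
        (fun p => p.1 < p.2 ∧ ¬ (p.1 % 2 = p.2 % 2) ∧ 2 * i + 1 ≤ p.2 - p.1),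
      (-1 : ℤ) ^ (p.1 - 1)
    = ((((2*n).divisors.filter fun m : ℕ => ((2*n)/m) % 2 = 1 ∧ R n i < (m:ℝ)).card : ℤ)
      - (((2*n).divisors.filter fun m : ℕ => m % 2 = 1 ∧ R n i < (m:ℝ)).card : ℤ)) := by
  have hN0 : 2 * n ≠ 0 := by omega
  set P := (Nat.divisorsAntidiagonal (2 * n)).filter
      (fun p => p.1 < p.2 ∧ ¬ (p.1 % 2 = p.2 % 2) ∧ 2 * i + 1 ≤ p.2 - p.1) with hP
  have memP : ∀ p ∈ P, p.1 * p.2 = 2 * n ∧ p.1 < p.2 ∧ ¬ (p.1 % 2 = p.2 % 2) ∧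
      2 * i + 1 ≤ p.2 - p.1 ∧ p.1 ≠ 0 ∧ p.2 ≠ 0 := by
    intro p hp
    rw [hP, Finset.mem_filter, Nat.mem_divisorsAntidiagonal] at hp
    obtain ⟨⟨hmul, -⟩, h1, h2, h3⟩ := hp
    refine ⟨hmul, h1, h2, h3, ?_, ?_⟩ <;> (rintro h; rw [h] at hmul; simp at hmul; omega)
  -- split the sum
  rw [← Finset.sum_filter_add_sum_filter_not P (fun p => p.1 % 2 = 1)]
  have e1 : ∑ p ∈ P.filter (fun p => p.1 % 2 = 1), (-1:ℤ) ^ (p.1 - 1)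
      = ((P.filter (fun p => p.1 % 2 = 1)).card : ℤ) := by
    rw [Finset.sum_congr rfl (g := fun _ => (1:ℤ)) ?_]
    · simp
    · intro p hp
      rw [Finset.mem_filter] at hp
      exact Even.neg_one_pow (Nat.even_iff.mpr (by have := (memP p hp.1).2.2.2.2.1; omega))
  have e2 : ∑ p ∈ P.filter (fun p => ¬ p.1 % 2 = 1), (-1:ℤ) ^ (p.1 - 1)
      = -((P.filter (fun p => ¬ p.1 % 2 = 1)).card : ℤ) := by
    rw [Finset.sum_congr rfl (g := fun _ => (-1:ℤ)) ?_]
    · simp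
    · intro p hp
      rw [Finset.mem_filter] at hp
      refine Odd.neg_one_pow (Nat.odd_iff.mpr ?_)
      have := (memP p hp.1).2.2.2.2.1
      have h2 := hp.2
      omega
  rw [e1, e2]
  have c1 : (P.filter (fun p => p.1 % 2 = 1)).card
      = ((2*n).divisors.filter fun m : ℕ => ((2*n)/m) % 2 = 1 ∧ R n i < (m:ℝ)).card := by
    refine Finset.card_bij (fun p _ => p.2) ?_ ?_ ?_
    · intro p hp
      rw [Finset.mem_filter] at hp
      obtain ⟨hmul, hlt, hpar, hcond, h10, h20⟩ := memP p hp.1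
      rw [Finset.mem_filter, Nat.mem_divisors]
      have hdvd : p.2 ∣ 2 * n := Dvd.intro_left p.1 hmul
      have hq : 2 * n / p.2 = p.1 :=
        Nat.div_eq_of_eq_mul_left (Nat.pos_of_ne_zero h20) hmul.symm
      exact ⟨⟨hdvd, hN0⟩, by rw [hq]; exact hp.2, (cond_iff n i hn hmul hlt).mp hcond⟩
    · intro p hp q hq hpq
      rw [Finset.mem_filter] at hp hq
      obtain ⟨hmulp, -, -, -, -, hp20⟩ := memP p hp.1
      obtain ⟨hmulq, -, -, -, -, hq20⟩ := memP q hq.1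
      have hpq' : p.2 = q.2 := hpq
      rw [hpq'] at hmulp
      have : p.1 = q.1 :=
        Nat.eq_of_mul_eq_mul_right (Nat.pos_of_ne_zero hq20) (hmulp.trans hmulq.symm)
      exact Prod.ext this hpq'
    · intro m hm
      rw [Finset.mem_filter, Nat.mem_divisors] at hm
      obtain ⟨⟨hdvd, -⟩, hodd, hR⟩ := hm
      have hm0 : m ≠ 0 := by rintro rfl; simp at hodd
      have hmul : (2 * n / m) * m = 2 * n := Nat.div_mul_cancel hdvd
      have hlt : 2 * n / m < m := div_lt_of_R_lt n i hn hdvd hR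
      have hme : m % 2 = 0 := by
        have h2d : 2 ∣ (2 * n / m) * m := by rw [hmul]; exact dvd_mul_right 2 n
        rcases (Nat.Prime.dvd_mul Nat.prime_two).mp h2d with h | h
        · omega
        · omega
      refine ⟨(2 * n / m, m), ?_, rfl⟩
      rw [Finset.mem_filter, hP, Finset.mem_filter, Nat.mem_divisorsAntidiagonal]
      refine ⟨⟨⟨hmul, hN0⟩, hlt, by simp; omega, (cond_iff n i hn hmul hlt).mpr hR⟩, hodd⟩
  have c2 : (P.filter (fun p => ¬ p.1 % 2 = 1)).card
      = ((2*n).divisors.filter fun m : ℕ => m % 2 = 1 ∧ R n i < (m:ℝ)).card := by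
    refine Finset.card_bij (fun p _ => p.2) ?_ ?_ ?_
    · intro p hp
      rw [Finset.mem_filter] at hp
      obtain ⟨hmul, hlt, hpar, hcond, h10, h20⟩ := memP p hp.1
      rw [Finset.mem_filter, Nat.mem_divisors]
      have hdvd : p.2 ∣ 2 * n := Dvd.intro_left p.1 hmul
      have h2o : p.2 % 2 = 1 := by
        have := hp.2
        omega
      exact ⟨⟨hdvd, hN0⟩, h2o, (cond_iff n i hn hmul hlt).mp hcond⟩
    · intro p hp q hq hpq
      rw [Finset.mem_filter] at hp hq
      obtain ⟨hmulp, -, -, -, -, hp20⟩ := memP p hp.1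
      obtain ⟨hmulq, -, -, -, -, hq20⟩ := memP q hq.1
      have hpq' : p.2 = q.2 := hpq
      rw [hpq'] at hmulp
      have : p.1 = q.1 :=
        Nat.eq_of_mul_eq_mul_right (Nat.pos_of_ne_zero hq20) (hmulp.trans hmulq.symm)
      exact Prod.ext this hpq'
    · intro m hm
      rw [Finset.mem_filter, Nat.mem_divisors] at hm
      obtain ⟨⟨hdvd, -⟩, hodd, hR⟩ := hm
      have hm0 : m ≠ 0 := by omega
      have hmul : (2 * n / m) * m = 2 * n := Nat.div_mul_cancel hdvd
      have hlt : 2 * n / m < m := div_lt_of_R_lt n i hn hdvd hR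
      have hke : (2 * n / m) % 2 = 0 := by
        have h2d : 2 ∣ (2 * n / m) * m := by rw [hmul]; exact dvd_mul_right 2 n
        rcases (Nat.Prime.dvd_mul Nat.prime_two).mp h2d with h | h
        · omega
        · omega
      refine ⟨(2 * n / m, m), ?_, rfl⟩
      rw [Finset.mem_filter, hP, Finset.mem_filter, Nat.mem_divisorsAntidiagonal]
      refine ⟨⟨⟨hmul, hN0⟩, hlt, by omega, (cond_iff n i hn hmul hlt).mpr hR⟩, by omega⟩
  rw [c1, c2]
  ring


end ACoeffAux

/-- `a_{n,i} = ∑ (-1)^{k-1}`, the sum being over pairs `(k,m)` of positive integers with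
`km = 2n`, `k < m`, `k ≢ m (mod 2)`, and `m - k ≥ 2i + 1`. -/
theorem aCoeff_eq_signed_sum (n i : ℕ) (hn : 1 ≤ n) :
    (aCoeff n i : ℤ) =
      ∑ p ∈ (Nat.divisorsAntidiagonal (2 * n)).filter
          (fun p => p.1 < p.2 ∧ ¬ (p.1 % 2 = p.2 % 2) ∧ 2 * i + 1 ≤ p.2 - p.1),
        (-1 : ℤ) ^ (p.1 - 1) := by
  have hL : aCoeff n i = (n.divisors.filter fun d : ℕ =>
      ACoeffAux.R n i / 2 < (d:ℝ) ∧ (d:ℝ) ≤ ACoeffAux.R n i).card := by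
    unfold aCoeff ACoeffAux.R
    rw [show ((n.divisors >>= fun a => pure ((a : ℕ) : ℝ)) : Finset ℝ)
        = n.divisors.image (fun a : ℕ => (a : ℝ)) from Finset.sup_singleton_apply _ _]
    rw [Finset.filter_image]
    exact Finset.card_image_of_injective _ Nat.cast_injective
  rw [ACoeffAux.sum_eq n i hn]
  have h := ACoeffAux.card_main n i hn
  have h' : (((2*n).divisors.filter fun m : ℕ =>
        ((2*n)/m) % 2 = 1 ∧ ACoeffAux.R n i < (m:ℝ)).card : ℤ)
      = ((n.divisors.filter fun d : ℕ =>
          ACoeffAux.R n i / 2 < (d:ℝ) ∧ (d:ℝ) ≤ ACoeffAux.R n i).card : ℤ)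
        + (((2*n).divisors.filter fun m : ℕ =>
          m % 2 = 1 ∧ ACoeffAux.R n i < (m:ℝ)).card : ℤ) := by
    exact_mod_cast congrArg (fun x : ℕ => (x : ℤ)) h.symm
  rw [h', hL]
  ring
end

section
/- For every integer n ≥ 1, the coefficient of t^n in the formal power series Π_{i≥1} (1−t^i)²·(1+t^{2i})⁻¹ over ℤ (equivalently, for every n, the coefficient of t^n in the finite product Π_{i=1}^{n} (1−t^i)²·(1+t^{2i})⁻¹) equals Σ_{(x,y) ∈ ℤ², x²+2y²=n} (−1)^{x+y}; in particular its absolute value equals the number of pairs (x,y) ∈ ℤ × ℤ with x² + 2y² = n. -/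
open PowerSeries Finset

variable {R : Type*} [CommRing R]

/-- ℤ-indexed Gaussian binomial coefficient in the variable `t`. -/
def gbz (t : R) : ℕ → ℤ → R
  | 0, k => if k = 0 then 1 else 0
  | m+1, k => gbz t m k + t ^ ((m+1-k : ℤ)).toNat * gbz t m (k-1)

lemma gbz_succ (t : R) (m : ℕ) (k : ℤ) :
    gbz t (m+1) k = gbz t m k + t ^ ((m+1-k : ℤ)).toNat * gbz t m (k-1) := rfl

lemma gbz_neg (t : R) (m : ℕ) (k : ℤ) (hk : k < 0) : gbz t m k = 0 := by
  induction m generalizing k with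
  | zero => simp [gbz, hk.ne]
  | succ m ih => rw [gbz_succ, ih k hk, ih (k-1) (by omega)]; ring

lemma gbz_gt (t : R) (m : ℕ) (k : ℤ) (hk : (m : ℤ) < k) : gbz t m k = 0 := by
  induction m generalizing k with
  | zero => simp [gbz]; omega
  | succ m ih =>
    rw [gbz_succ, ih k (by push_cast at hk ⊢; omega), ih (k-1) (by push_cast at hk ⊢; omega)]
    ring

lemma gbz_zero (t : R) (m : ℕ) : gbz t m 0 = 1 := by
  induction m with
  | zero => simp [gbz]
  | succ m ih => rw [gbz_succ, ih, gbz_neg t m _ (by omega)]; ring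

lemma gbz_self (t : R) (m : ℕ) : gbz t m m = 1 := by
  induction m with
  | zero => simp [gbz]
  | succ m ih =>
    rw [gbz_succ, gbz_gt t m _ (by push_cast; omega)]
    have h1 : ((m+1 : ℕ) : ℤ) - 1 = (m : ℤ) := by push_cast; ring
    have h2 : ((m : ℤ) + 1 - ((m+1 : ℕ) : ℤ)).toNat = 0 := by push_cast; omega
    rw [h1, h2, ih]; ring

lemma gbz_pascal2 (t : R) (m : ℕ) (k : ℤ) :
    gbz t (m+1) k = t ^ k.toNat * gbz t m k + gbz t m (k-1) := by
  induction m generalizing k with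
  | zero =>
    rcases eq_or_ne k 0 with rfl | h0
    · simp [gbz]
    rcases eq_or_ne k 1 with rfl | h1
    · norm_num [gbz]
    · have h1' : k - 1 ≠ 0 := by omega
      simp [gbz, h0, h1']
  | succ m ih =>
    rcases lt_or_ge k 0 with hk | hk
    · rw [gbz_neg t _ k hk, gbz_neg t _ k hk, gbz_neg t _ (k-1) (by omega)]; ring
    rcases eq_or_ne k 0 with rfl | h0
    · rw [gbz_zero, gbz_zero, gbz_neg t (m+1) (0-1 : ℤ) (by omega)]; norm_num
    rw [gbz_succ t (m+1) k]
    rcases lt_or_ge ((m:ℤ)+1) k with hk2 | hk2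
    · -- k ≥ m+2
      rw [gbz_gt t (m+1) k (by push_cast; omega)]
      rcases eq_or_ne k ((m:ℤ)+2) with rfl | hne
      · rw [show (((m+1:ℕ):ℤ)+1-((m:ℤ)+2)).toNat = 0 from by push_cast; omega]
        ring
      · rw [gbz_gt t (m+1) (k-1) (by push_cast; omega)]; ring
    · -- 1 ≤ k ≤ m+1
      conv_lhs => rw [ih k, ih (k-1)]
      conv_rhs => rw [gbz_succ t m k, gbz_succ t m (k-1)]
      have e1 : (((m+1:ℕ):ℤ)+1-k).toNat + (k-1).toNat = k.toNat + ((m:ℤ)+1-k).toNat := by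
        push_cast; omega
      have e2 : (((m+1:ℕ):ℤ)+1-k).toNat = ((m:ℤ)+1-(k-1)).toNat := by push_cast; omega
      calc t ^ k.toNat * gbz t m k + gbz t m (k - 1) +
            t ^ (((m+1:ℕ):ℤ)+1-k).toNat * (t ^ (k-1).toNat * gbz t m (k-1) + gbz t m (k-1-1))
          = t ^ k.toNat * gbz t m k
            + t ^ ((((m+1:ℕ):ℤ)+1-k).toNat + (k-1).toNat) * gbz t m (k-1)
            + gbz t m (k - 1)
            + t ^ (((m+1:ℕ):ℤ)+1-k).toNat * gbz t m (k-1-1) := by rw [pow_add]; ring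
        _ = t ^ k.toNat * (gbz t m k + t ^ ((m:ℤ)+1-k).toNat * gbz t m (k-1))
            + (gbz t m (k-1) + t ^ ((m:ℤ)+1-(k-1)).toNat * gbz t m (k-1-1)) := by
            rw [e1, e2, pow_add]; ring

lemma gbz_dagger (t : R) (m : ℕ) (k : ℤ) :
    gbz t (m+2) (k+1) = t ^ (k+1).toNat * gbz t m (k+1)
      + (1 + t^(m+1)) * gbz t m k + t ^ ((m+1-k : ℤ)).toNat * gbz t m (k-1) := by
  rcases lt_or_ge k 0 with hk | hk
  · -- k ≤ -1
    rcases eq_or_ne k (-1) with rfl | hne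
    · rw [show (-1 + 1 : ℤ) = 0 from by ring, gbz_zero, gbz_zero,
        gbz_neg t m (-1 : ℤ) (by omega), gbz_neg t m (-1-1 : ℤ) (by omega)]
      norm_num
    · rw [gbz_neg t _ (k+1) (by omega), gbz_neg t m (k+1) (by omega),
        gbz_neg t m k (by omega), gbz_neg t m (k-1) (by omega)]
      ring
  rcases lt_or_ge ((m:ℤ)) k with hk2 | hk2
  · -- k ≥ m+1
    rcases eq_or_ne k ((m:ℤ)+1) with rfl | hne
    · rw [gbz_gt t m ((m:ℤ)+1+1) (by omega), gbz_gt t m ((m:ℤ)+1) (by omega),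
        show ((m:ℤ)+1-1 : ℤ) = ((m:ℕ):ℤ) from by ring, gbz_self,
        show ((m:ℤ)+1-((m:ℤ)+1)).toNat = 0 from by omega,
        show ((m:ℤ)+1+1 : ℤ) = ((m+2 : ℕ):ℤ) from by push_cast; ring, gbz_self]
      norm_num
    · rw [gbz_gt t (m+2) (k+1) (by push_cast; omega), gbz_gt t m (k+1) (by omega),
        gbz_gt t m k (by omega), gbz_gt t m (k-1) (by omega)]
      ring
  · -- 0 ≤ k ≤ m : main case
    rw [gbz_succ t (m+1) (k+1)]
    have e0 : (k+1-1 : ℤ) = k := by ring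
    conv_lhs => rw [gbz_pascal2 t m (k+1), e0, gbz_pascal2 t m k]
    have e1 : (((m+1:ℕ):ℤ)+1-(k+1)).toNat = ((m:ℤ)+1-k).toNat := by push_cast; omega
    have e2 : ((m:ℤ)+1-k).toNat + k.toNat = m+1 := by omega
    rw [e1]
    calc t ^ (k+1).toNat * gbz t m (k+1) + gbz t m k
          + t ^ ((m:ℤ)+1-k).toNat * (t ^ k.toNat * gbz t m k + gbz t m (k-1))
        = t ^ (k+1).toNat * gbz t m (k+1)
          + (1 + t ^ (((m:ℤ)+1-k).toNat + k.toNat)) * gbz t m k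
          + t ^ ((m:ℤ)+1-k).toNat * gbz t m (k-1) := by rw [pow_add]; ring
      _ = _ := by rw [e2]

/-- `Fp t m = \prod_{i=1}^m (1 - t^i)`, as a product over `Ioc 0 m`. -/
def Fp (t : R) (m : ℕ) : R := ∏ i ∈ Finset.Ioc 0 m, (1 - t ^ i)

lemma Fp_zero (t : R) : Fp t 0 = 1 := by simp [Fp]

lemma Fp_succ (t : R) (m : ℕ) : Fp t (m+1) = Fp t m * (1 - t ^ (m+1)) := by
  rw [Fp, Fp, Finset.prod_Ioc_succ_top (Nat.zero_le m)]

lemma gbz_mul_Fp (t : R) (m j : ℕ) (hj : j ≤ m) :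
    gbz t m (j : ℤ) * Fp t j * Fp t (m - j) = Fp t m := by
  induction m generalizing j with
  | zero =>
    interval_cases j
    simp [gbz, Fp]
  | succ m ih =>
    rcases eq_or_ne j 0 with rfl | h0
    · simp [gbz_zero, Fp_zero]
    rcases eq_or_ne j (m+1) with rfl | hm
    · rw [gbz_self]
      simp [Fp_zero]
    -- 1 ≤ j ≤ m
    have hj1 : 1 ≤ j := by omega
    have hjm : j ≤ m := by omega
    have E1 : gbz t (m+1) (j : ℤ)
        = gbz t m (j : ℤ) + t ^ ((m-j)+1) * gbz t m ((j-1 : ℕ) : ℤ) := by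
      rw [gbz_succ, show ((j:ℤ) - 1) = ((j-1 : ℕ) : ℤ) from by push_cast [hj1]; ring,
        show ((m:ℤ)+1-(j:ℤ)).toNat = (m-j)+1 from by omega]
    have E2 := ih j hjm
    have E3 := ih (j-1) (by omega)
    rw [show m - (j-1) = (m-j)+1 from by omega] at E3
    have hFj : Fp t j = Fp t (j-1) * (1 - t ^ j) := by
      conv_lhs => rw [show j = (j-1)+1 from by omega, Fp_succ,
        show (j-1)+1 = j from by omega]
    have hFa : Fp t ((m-j)+1) = Fp t (m-j) * (1 - t ^ ((m-j)+1)) := Fp_succ t (m-j)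
    have hpow : t ^ ((m-j)+1) * t ^ j = t ^ (m+1) := by rw [← pow_add]; congr 1; omega
    rw [show (m+1) - j = (m-j)+1 from by omega, E1, hFj, hFa, Fp_succ t m]
    rw [hFj] at E2
    rw [hFa] at E3
    linear_combination (1 - t^((m-j)+1)) * E2 + t^((m-j)+1) * (1 - t^j) * E3
      - Fp t m * hpow

lemma dvd_mul_sub_one {d a b : R} (ha : d ∣ a - 1) (hb : d ∣ b - 1) : d ∣ a * b - 1 := by
  have : a * b - 1 = a * (b - 1) + (a - 1) := by ring
  rw [this]
  exact dvd_add (Dvd.dvd.mul_left hb a) ha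

lemma dvd_prod_sub_one {ι : Type*} {d : R} (s : Finset ι) (f : ι → R)
    (h : ∀ i ∈ s, d ∣ f i - 1) : d ∣ (∏ i ∈ s, f i) - 1 := by
  classical
  induction s using Finset.induction with
  | empty => simp
  | insert a s hx ih =>
    rw [Finset.prod_insert hx]
    exact dvd_mul_sub_one (h _ (Finset.mem_insert_self _ _))
      (ih fun i hi => h i (Finset.mem_insert_of_mem hi))

lemma dvd_sub_mul_mul {d a a' b b' : R} (ha : d ∣ a - a') (hb : d ∣ b - b') :
    d ∣ a * b - a' * b' := by
  have : a * b - a' * b' = (a - a') * b + a' * (b - b') := by ring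
  rw [this]
  exact dvd_add (ha.mul_right b) (hb.mul_left a')

open PowerSeries in
lemma isUnit_Fp (e m : ℕ) (he : 1 ≤ e) : IsUnit (Fp ((X : ℤ⟦X⟧)^e) m) := by
  rw [PowerSeries.isUnit_iff_constantCoeff, Fp, map_prod]
  have : ∀ i ∈ Finset.Ioc 0 m, (constantCoeff (R := ℤ)) (1 - ((X : ℤ⟦X⟧)^e)^i) = 1 := by
    intro i hi
    have hi1 : 1 ≤ i := (Finset.mem_Ioc.mp hi).1
    have h0 : (constantCoeff (R := ℤ)) ((X:ℤ⟦X⟧)^(e*i)) = 0 := by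
      rw [← PowerSeries.coeff_zero_eq_constantCoeff_apply, PowerSeries.coeff_X_pow,
        if_neg (by positivity : (0:ℕ) ≠ e*i)]
    rw [map_sub, map_one, ← pow_mul, h0, sub_zero]
  rw [Finset.prod_congr rfl this]
  simp

open PowerSeries in
lemma Fp_gbz_cong (e n k : ℕ) (he : 1 ≤ e) (hk : k ≤ n) (j : ℕ)
    (hj : j = n + k ∨ j = n - k) :
    (X : ℤ⟦X⟧)^(e*(n-k+1)) ∣ Fp ((X:ℤ⟦X⟧)^e) n * gbz ((X:ℤ⟦X⟧)^e) (2*n) (j : ℤ) - 1 := by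
  set t : ℤ⟦X⟧ := (X : ℤ⟦X⟧)^e with ht
  have h1 : gbz t (2*n) (j : ℤ) * Fp t (n+k) * Fp t (n-k) = Fp t (2*n) := by
    rcases hj with rfl | rfl
    · have := gbz_mul_Fp t (2*n) (n+k) (by omega)
      rwa [show 2*n - (n+k) = n - k from by omega] at this
    · have := gbz_mul_Fp t (2*n) (n-k) (by omega)
      rw [show 2*n - (n-k) = n + k from by omega] at this
      rw [← this]; ring
  have split1 : Fp t n = Fp t (n-k) * ∏ i ∈ Finset.Ioc (n-k) n, (1 - t^i) := by
    rw [Fp, Fp, Finset.prod_Ioc_consecutive _ (Nat.zero_le (n-k)) (by omega : n - k ≤ n)]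
  have split2 : Fp t (2*n) = Fp t (n+k) * ∏ i ∈ Finset.Ioc (n+k) (2*n), (1 - t^i) := by
    rw [Fp, Fp, Finset.prod_Ioc_consecutive _ (Nat.zero_le (n+k)) (by omega : n + k ≤ 2*n)]
  have U : IsUnit (Fp t (n+k)) := isUnit_Fp e (n+k) he
  have h2 : gbz t (2*n) (j : ℤ) * Fp t (n-k) = ∏ i ∈ Finset.Ioc (n+k) (2*n), (1 - t^i) := by
    apply U.mul_left_cancel
    rw [← mul_assoc]
    conv_lhs => rw [mul_comm (Fp t (n+k)) (gbz t (2*n) (j:ℤ))]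
    rw [h1, split2]
  have h3 : Fp t n * gbz t (2*n) (j : ℤ)
      = (∏ i ∈ Finset.Ioc (n-k) n, (1 - t^i)) * ∏ i ∈ Finset.Ioc (n+k) (2*n), (1 - t^i) := by
    rw [split1, ← h2]; ring
  rw [h3]
  apply dvd_mul_sub_one
  · apply dvd_prod_sub_one
    intro i hi
    have hi1 : n - k + 1 ≤ i := by
      have := (Finset.mem_Ioc.mp hi).1; omega
    have : (1 - t^i) - 1 = -(X : ℤ⟦X⟧)^(e*i) := by rw [ht, ← pow_mul]; ring
    rw [this]
    exact (pow_dvd_pow _ (by nlinarith)).neg_right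
  · apply dvd_prod_sub_one
    intro i hi
    have hi1 : n - k + 1 ≤ i := by
      have := (Finset.mem_Ioc.mp hi).1; omega
    have : (1 - t^i) - 1 = -(X : ℤ⟦X⟧)^(e*i) := by rw [ht, ← pow_mul]; ring
    rw [this]
    exact (pow_dvd_pow _ (by nlinarith)).neg_right

open PowerSeries

/-- sign `(-1)^k` for `k : ℤ`. -/
def sgnz (k : ℤ) : ℤ := (((-1:ℤˣ)^k : ℤˣ) : ℤ)

lemma sgnz_sub_one (k : ℤ) : sgnz (k-1) = - sgnz k := by
  unfold sgnz
  rw [zpow_sub_one, show ((-1:ℤˣ))⁻¹ = -1 from by decide]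
  push_cast
  ring

lemma sgnz_add_one (k : ℤ) : sgnz (k+1) = - sgnz k := by
  unfold sgnz
  rw [zpow_add_one]
  push_cast
  ring

/-- summand of the theta-like sum -/
noncomputable def SqT (c n : ℕ) (k : ℤ) : ℤ⟦X⟧ :=
  C (R := ℤ) (sgnz k) * ((X:ℤ⟦X⟧)^(c * k.natAbs^2) * gbz ((X:ℤ⟦X⟧)^(2*c)) (2*n) ((n:ℤ)+k))

noncomputable def Sq (c n : ℕ) : ℤ⟦X⟧ := ∑ k ∈ Finset.Icc (-(n:ℤ)) (n:ℤ), SqT c n k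

lemma SqT_vanish (c n : ℕ) (k : ℤ) (hk : k ∉ Finset.Icc (-(n:ℤ)) (n:ℤ)) : SqT c n k = 0 := by
  rw [Finset.mem_Icc, not_and_or] at hk
  unfold SqT
  rcases hk with hk | hk
  · rw [gbz_neg _ _ _ (by omega), mul_zero, mul_zero]
  · rw [gbz_gt _ _ _ (by push_cast; omega), mul_zero, mul_zero]

lemma Sq_ext (c n M : ℕ) (h : n ≤ M) :
    Sq c n = ∑ k ∈ Finset.Icc (-(M:ℤ)) (M:ℤ), SqT c n k := by
  apply Finset.sum_subset (Finset.Icc_subset_Icc (by omega) (by omega))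
  intro k _ hk
  exact SqT_vanish c n k hk

lemma Sq_succ (c n : ℕ) :
    Sq c (n+1) = (1 - (X:ℤ⟦X⟧)^(c*(2*n+1)))^2 * Sq c n := by
  set t : ℤ⟦X⟧ := (X:ℤ⟦X⟧)^(2*c) with ht
  -- the three pieces
  set A : ℤ → ℤ⟦X⟧ := fun k =>
    C (R := ℤ) (sgnz k) * ((X:ℤ⟦X⟧)^(c * k.natAbs^2)
      * (t ^ ((n:ℤ)+k+1).toNat * gbz t (2*n) ((n:ℤ)+k+1))) with hA
  set B : ℤ → ℤ⟦X⟧ := fun k =>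
    C (R := ℤ) (sgnz k) * ((X:ℤ⟦X⟧)^(c * k.natAbs^2)
      * ((1 + t^(2*n+1)) * gbz t (2*n) ((n:ℤ)+k))) with hB
  set D : ℤ → ℤ⟦X⟧ := fun k =>
    C (R := ℤ) (sgnz k) * ((X:ℤ⟦X⟧)^(c * k.natAbs^2)
      * (t ^ ((n:ℤ)+1-k).toNat * gbz t (2*n) ((n:ℤ)+k-1))) with hD
  have hsplit : Sq c (n+1)
      = (∑ k ∈ Finset.Icc (-(n+1:ℕ):ℤ) ((n+1:ℕ):ℤ), A k)
      + (∑ k ∈ Finset.Icc (-(n+1:ℕ):ℤ) ((n+1:ℕ):ℤ), B k)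
      + (∑ k ∈ Finset.Icc (-(n+1:ℕ):ℤ) ((n+1:ℕ):ℤ), D k) := by
    rw [Sq, ← Finset.sum_add_distrib, ← Finset.sum_add_distrib]
    apply Finset.sum_congr rfl
    intro k hk
    unfold SqT
    have harg : ((n+1:ℕ):ℤ) + k = ((n:ℤ)+k)+1 := by push_cast; ring
    have hm : 2*(n+1) = (2*n)+2 := by ring
    rw [harg, hm, gbz_dagger t (2*n) ((n:ℤ)+k)]
    have he : ((2*n:ℕ):ℤ)+1-((n:ℤ)+k) = (n:ℤ)+1-k := by push_cast; ring
    rw [he]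
    simp only [hA, hB, hD]
    ring
  -- piece B
  have hBsum : (∑ k ∈ Finset.Icc (-(n+1:ℕ):ℤ) ((n+1:ℕ):ℤ), B k)
      = (1 + t^(2*n+1)) * Sq c n := by
    rw [Sq_ext c n (n+1) (by omega), Finset.mul_sum]
    apply Finset.sum_congr rfl
    intro k hk
    unfold SqT
    simp only [hB]
    ring
  -- piece A
  have hAsum : (∑ k ∈ Finset.Icc (-(n+1:ℕ):ℤ) ((n+1:ℕ):ℤ), A k)
      = - (X:ℤ⟦X⟧)^(c*(2*n+1)) * Sq c n := by
    have hmap : (Finset.Icc (-(n+1:ℕ):ℤ) ((n+1:ℕ):ℤ)).map (addRightEmbedding 1)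
        = Finset.Icc (-(n:ℤ)) ((n:ℤ)+2) := by
      rw [Finset.map_add_right_Icc]
      congr 1 <;> push_cast <;> ring
    have h1 : (∑ k ∈ Finset.Icc (-(n+1:ℕ):ℤ) ((n+1:ℕ):ℤ), A k)
        = ∑ k ∈ Finset.Icc (-(n:ℤ)) ((n:ℤ)+2), A (k-1) := by
      rw [← hmap, Finset.sum_map]
      apply Finset.sum_congr rfl
      intro k _
      simp [addRightEmbedding]
    rw [h1]
    have h2 : (∑ k ∈ Finset.Icc (-(n:ℤ)) ((n:ℤ)+2), A (k-1))
        = ∑ k ∈ Finset.Icc (-(n:ℤ)) (n:ℤ), A (k-1) := by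
      symm
      apply Finset.sum_subset (Finset.Icc_subset_Icc le_rfl (by omega))
      intro k hk hk2
      have hk3 : (n:ℤ) < k := by
        simp only [Finset.mem_Icc] at hk hk2; omega
      simp only [hA]
      rw [gbz_gt t (2*n) ((n:ℤ)+(k-1)+1) (by push_cast; omega)]
      ring
    rw [h2, Sq, Finset.mul_sum]
    apply Finset.sum_congr rfl
    intro k hk
    rw [Finset.mem_Icc] at hk
    simp only [hA]
    unfold SqT
    have harg : (n:ℤ)+(k-1)+1 = (n:ℤ)+k := by ring
    rw [harg, sgnz_sub_one, map_neg]
    have hexp : c * (k-1).natAbs^2 + 2*c*((n:ℤ)+k).toNat = c * k.natAbs^2 + c*(2*n+1) := by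
      have hnn : ((((n:ℤ)+k).toNat : ℤ)) = (n:ℤ)+k := Int.toNat_of_nonneg (by omega)
      have hz : (c:ℤ) * ((k-1).natAbs:ℤ)^2 + 2*(c:ℤ)*((((n:ℤ)+k).toNat : ℤ))
          = (c:ℤ) * (k.natAbs:ℤ)^2 + (c:ℤ)*(2*(n:ℤ)+1) := by
        rw [hnn, Int.natAbs_sq, Int.natAbs_sq]; ring
      exact_mod_cast hz
    calc -C (R := ℤ) (sgnz k) * ((X:ℤ⟦X⟧)^(c * (k-1).natAbs^2)
          * (t ^ ((n:ℤ)+k).toNat * gbz t (2*n) ((n:ℤ)+k)))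
        = -(C (R := ℤ) (sgnz k) * ((X:ℤ⟦X⟧)^(c * (k-1).natAbs^2 + 2*c*((n:ℤ)+k).toNat)
            * gbz t (2*n) ((n:ℤ)+k))) := by
          rw [pow_add, ht, ← pow_mul]; ring
      _ = - (X:ℤ⟦X⟧)^(c*(2*n+1)) * (C (R := ℤ) (sgnz k) * ((X:ℤ⟦X⟧)^(c * k.natAbs^2)
            * gbz t (2*n) ((n:ℤ)+k))) := by
          rw [hexp, pow_add]; ring
  -- piece D
  have hDsum : (∑ k ∈ Finset.Icc (-(n+1:ℕ):ℤ) ((n+1:ℕ):ℤ), D k)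
      = - (X:ℤ⟦X⟧)^(c*(2*n+1)) * Sq c n := by
    have hmap : (Finset.Icc (-(n+1:ℕ):ℤ) ((n+1:ℕ):ℤ)).map (addRightEmbedding (-1))
        = Finset.Icc (-(n:ℤ)-2) ((n:ℤ)) := by
      rw [Finset.map_add_right_Icc]
      congr 1 <;> push_cast <;> ring
    have h1 : (∑ k ∈ Finset.Icc (-(n+1:ℕ):ℤ) ((n+1:ℕ):ℤ), D k)
        = ∑ k ∈ Finset.Icc (-(n:ℤ)-2) ((n:ℤ)), D (k+1) := by
      rw [← hmap, Finset.sum_map]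
      apply Finset.sum_congr rfl
      intro k _
      simp [addRightEmbedding]
    rw [h1]
    have h2 : (∑ k ∈ Finset.Icc (-(n:ℤ)-2) ((n:ℤ)), D (k+1))
        = ∑ k ∈ Finset.Icc (-(n:ℤ)) (n:ℤ), D (k+1) := by
      symm
      apply Finset.sum_subset (Finset.Icc_subset_Icc (by omega) le_rfl)
      intro k hk hk2
      have hk3 : k < -(n:ℤ) := by
        simp only [Finset.mem_Icc] at hk hk2; omega
      simp only [hD]
      rw [gbz_neg t (2*n) ((n:ℤ)+(k+1)-1) (by omega)]
      ring
    rw [h2, Sq, Finset.mul_sum]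
    apply Finset.sum_congr rfl
    intro k hk
    rw [Finset.mem_Icc] at hk
    simp only [hD]
    unfold SqT
    have harg : (n:ℤ)+(k+1)-1 = (n:ℤ)+k := by ring
    have harg2 : (n:ℤ)+1-(k+1) = (n:ℤ)-k := by ring
    rw [harg, harg2, sgnz_add_one, map_neg]
    have hexp : c * (k+1).natAbs^2 + 2*c*((n:ℤ)-k).toNat = c * k.natAbs^2 + c*(2*n+1) := by
      have hnn : ((((n:ℤ)-k).toNat : ℤ)) = (n:ℤ)-k := Int.toNat_of_nonneg (by omega)
      have hz : (c:ℤ) * ((k+1).natAbs:ℤ)^2 + 2*(c:ℤ)*((((n:ℤ)-k).toNat : ℤ))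
          = (c:ℤ) * (k.natAbs:ℤ)^2 + (c:ℤ)*(2*(n:ℤ)+1) := by
        rw [hnn, Int.natAbs_sq, Int.natAbs_sq]; ring
      exact_mod_cast hz
    calc -C (R := ℤ) (sgnz k) * ((X:ℤ⟦X⟧)^(c * (k+1).natAbs^2)
          * (t ^ ((n:ℤ)-k).toNat * gbz t (2*n) ((n:ℤ)+k)))
        = -(C (R := ℤ) (sgnz k) * ((X:ℤ⟦X⟧)^(c * (k+1).natAbs^2 + 2*c*((n:ℤ)-k).toNat)
            * gbz t (2*n) ((n:ℤ)+k))) := by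
          rw [pow_add, ht, ← pow_mul]; ring
      _ = - (X:ℤ⟦X⟧)^(c*(2*n+1)) * (C (R := ℤ) (sgnz k) * ((X:ℤ⟦X⟧)^(c * k.natAbs^2)
            * gbz t (2*n) ((n:ℤ)+k))) := by
          rw [hexp, pow_add]; ring
  rw [hsplit, hAsum, hBsum, hDsum, ht]
  have hpow : ((X:ℤ⟦X⟧)^(2*c))^(2*n+1) = ((X:ℤ⟦X⟧)^(c*(2*n+1)))^2 := by
    rw [← pow_mul, ← pow_mul]
    congr 1
    ring
  rw [hpow]
  ring

lemma Sq_zero (c : ℕ) : Sq c 0 = 1 := by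
  rw [Sq]
  norm_num
  unfold SqT sgnz
  norm_num [gbz]

lemma Sq_closed (c n : ℕ) :
    Sq c n = ∏ j ∈ Finset.Icc 1 n, (1 - (X:ℤ⟦X⟧)^(c*(2*j-1)))^2 := by
  induction n with
  | zero => simp [Sq_zero]
  | succ n ih =>
    rw [Sq_succ, ih, Finset.prod_Icc_succ_top (by omega : 1 ≤ n+1),
      show c*(2*(n+1)-1) = c*(2*n+1) from by rw [show 2*(n+1)-1 = 2*n+1 from by omega]]
    ring

/-- truncation of the theta series -/
noncomputable def Th (c n : ℕ) : ℤ⟦X⟧ :=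
  ∑ k ∈ Finset.Icc (-(n:ℤ)) (n:ℤ), C (R := ℤ) (sgnz k) * (X:ℤ⟦X⟧)^(c * k.natAbs^2)

lemma gauss_cong (c n : ℕ) (hc : 1 ≤ c) :
    (X:ℤ⟦X⟧)^(c*(2*n+1)) ∣
      Fp ((X:ℤ⟦X⟧)^(2*c)) n * Sq c n - Th c n := by
  rw [Sq, Th, Finset.mul_sum, ← Finset.sum_sub_distrib]
  apply Finset.dvd_sum
  intro k hk
  rw [Finset.mem_Icc] at hk
  unfold SqT
  set t : ℤ⟦X⟧ := (X:ℤ⟦X⟧)^(2*c) with ht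
  have hterm : Fp t n * (C (R := ℤ) (sgnz k) * ((X:ℤ⟦X⟧)^(c * k.natAbs^2)
        * gbz t (2*n) ((n:ℤ)+k))) - C (R := ℤ) (sgnz k) * (X:ℤ⟦X⟧)^(c * k.natAbs^2)
      = C (R := ℤ) (sgnz k) * ((X:ℤ⟦X⟧)^(c * k.natAbs^2)
        * (Fp t n * gbz t (2*n) ((n:ℤ)+k) - 1)) := by ring
  rw [hterm]
  have hj : ∃ j : ℕ, ((j:ℤ) = (n:ℤ)+k ∧ (j = n + k.natAbs ∨ j = n - k.natAbs)) := by
    rcases le_or_gt 0 k with h | h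
    · exact ⟨n + k.natAbs, by omega, Or.inl rfl⟩
    · exact ⟨n - k.natAbs, by omega, Or.inr rfl⟩
  obtain ⟨j, hj1, hj2⟩ := hj
  have hdvd := Fp_gbz_cong (2*c) n k.natAbs (by omega) (by omega) j hj2
  rw [hj1] at hdvd
  apply Dvd.dvd.mul_left
  calc (X:ℤ⟦X⟧)^(c*(2*n+1)) ∣ (X:ℤ⟦X⟧)^(c * k.natAbs^2) * (X:ℤ⟦X⟧)^(2*c*(n-k.natAbs+1)) := by
        rw [← pow_add]
        apply pow_dvd_pow
        obtain ⟨b, hb⟩ : ∃ b, n = k.natAbs + b := ⟨n - k.natAbs, by omega⟩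
        rw [hb, show k.natAbs + b - k.natAbs + 1 = b + 1 from by omega]
        have key : 2*k.natAbs ≤ k.natAbs^2+1 := by
          zify
          nlinarith [sq_nonneg ((k.natAbs:ℤ)-1)]
        nlinarith [Nat.mul_le_mul_left c key]
    _ ∣ (X:ℤ⟦X⟧)^(c * k.natAbs^2) * (Fp t n * gbz t (2*n) ((n:ℤ)+k) - 1) :=
        mul_dvd_mul_left _ hdvd

lemma prod_Icc_even_odd (g : ℕ → ℤ⟦X⟧) (N : ℕ) :
    ∏ i ∈ Finset.Icc 1 (2*N), g i
      = (∏ i ∈ Finset.Icc 1 N, g (2*i)) * ∏ i ∈ Finset.Icc 1 N, g (2*i-1) := by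
  induction N with
  | zero => simp
  | succ N ih =>
    rw [show 2*(N+1) = (2*N+1)+1 from by ring,
      Finset.prod_Icc_succ_top (by omega : 1 ≤ 2*N+1+1),
      Finset.prod_Icc_succ_top (by omega : 1 ≤ 2*N+1),
      Finset.prod_Icc_succ_top (by omega : 1 ≤ N+1),
      Finset.prod_Icc_succ_top (by omega : 1 ≤ N+1), ih,
      show 2*(N+1) = 2*N+1+1 from by ring, show 2*N+1+1-1 = 2*N+1 from by omega]
    ring

lemma prod_drop (d : ℤ⟦X⟧) (N N' : ℕ) (h : N ≤ N') (f : ℕ → ℤ⟦X⟧)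
    (hf : ∀ i, N < i → i ≤ N' → d ∣ f i - 1) :
    d ∣ (∏ i ∈ Finset.Icc 1 N', f i) - ∏ i ∈ Finset.Icc 1 N, f i := by
  have hsplit : (∏ i ∈ Finset.Icc 1 N', f i)
      = (∏ i ∈ Finset.Icc 1 N, f i) * ∏ i ∈ Finset.Ioc N N', f i := by
    rw [← zero_add 1, Finset.Icc_add_one_left_eq_Ioc, Finset.Icc_add_one_left_eq_Ioc,
      Finset.prod_Ioc_consecutive _ (Nat.zero_le N) h]
  rw [hsplit]
  have : (∏ i ∈ Finset.Icc 1 N, f i) * (∏ i ∈ Finset.Ioc N N', f i)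
        - (∏ i ∈ Finset.Icc 1 N, f i)
      = (∏ i ∈ Finset.Icc 1 N, f i) * ((∏ i ∈ Finset.Ioc N N', f i) - 1) := by ring
  rw [this]
  apply Dvd.dvd.mul_left
  apply dvd_prod_sub_one
  intro i hi
  rw [Finset.mem_Ioc] at hi
  exact hf i hi.1 hi.2

lemma sign_const {x y x' y' : ℤ} (h : x^2 + 2*y^2 = x'^2 + 2*y'^2) :
    ((-1:ℤˣ)^(x+y) : ℤˣ) = (-1:ℤˣ)^(x'+y') := by
  have hx : Even (x - x') := by
    have h2 : Even (x^2 - x'^2) := ⟨y'^2 - y^2, by linarith⟩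
    have e1 : Even (x^2) ↔ Even x := Int.even_pow' (by norm_num)
    have e2 : Even (x'^2) ↔ Even x' := Int.even_pow' (by norm_num)
    rw [Int.even_sub] at h2 ⊢
    rw [e1, e2] at h2
    exact h2
  obtain ⟨a, ha⟩ := hx
  have hxx : x = x' + 2*a := by omega
  subst hxx
  have hdd : (2:ℤ) * (y'^2 - y^2) = 2 * (2*a*x' + 2*a^2) := by linear_combination -h
  have hy : y'^2 - y^2 = 2*a*x' + 2*a^2 := mul_left_cancel₀ two_ne_zero hdd
  have hyy : Even (y - y') := by
    have h2' : Even (y^2 - y'^2) := by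
      refine ⟨-(a*x' + a^2), ?_⟩
      linarith
    have e1 : Even (y^2) ↔ Even y := Int.even_pow' (by norm_num)
    have e2 : Even (y'^2) ↔ Even y' := Int.even_pow' (by norm_num)
    rw [Int.even_sub] at h2' ⊢
    rw [e1, e2] at h2'
    exact h2'
  obtain ⟨b, hb⟩ := hyy
  have hm : x' + 2*a + y = (x' + y') + 2*(a+b) := by omega
  rw [hm, zpow_add, zpow_mul, show ((-1:ℤˣ))^(2:ℤ) = 1 from by decide, one_zpow, mul_one]

lemma mem_box {n : ℕ} (hn : 1 ≤ n) {p : ℤ × ℤ} (h : p.1^2 + 2*p.2^2 = (n:ℤ)) :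
    p ∈ (Finset.Icc (-(n:ℤ)) (n:ℤ)) ×ˢ (Finset.Icc (-(n:ℤ)) (n:ℤ)) := by
  have hn' : (1:ℤ) ≤ (n:ℤ) := by exact_mod_cast hn
  rw [Finset.mem_product, Finset.mem_Icc, Finset.mem_Icc]
  refine ⟨⟨?_, ?_⟩, ?_, ?_⟩
  · nlinarith [sq_nonneg (p.1+1), sq_nonneg p.2]
  · nlinarith [sq_nonneg (p.1-1), sq_nonneg p.2]
  · nlinarith [sq_nonneg (p.2+1), sq_nonneg p.1]
  · nlinarith [sq_nonneg (p.2-1), sq_nonneg p.1]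

/-- The coefficient of `t^n` in `∏_{i≥1} (1-t^i)²(1+t^{2i})⁻¹ ∈ ℤ[[t]]` (for `n ≥ 1` it only
involves the factors with `i ≤ n`) equals the signed count `∑_{x²+2y²=n} (-1)^{x+y}`, and its
absolute value is the number of pairs `(x,y) ∈ ℤ²` with `x² + 2y² = n`. -/
theorem coeff_prod_eq_signed_count (n : ℕ) (hn : 1 ≤ n) :
    PowerSeries.coeff (R := ℤ) n
        (∏ i ∈ Finset.Icc 1 n,
          (1 - PowerSeries.X ^ i) ^ 2 *
            PowerSeries.invOfUnit (1 + PowerSeries.X ^ (2 * i)) 1) =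
      (∑ p ∈ (Finset.Icc (-(n : ℤ)) (n : ℤ) ×ˢ Finset.Icc (-(n : ℤ)) (n : ℤ)).filter
          (fun p => p.1 ^ 2 + 2 * p.2 ^ 2 = (n : ℤ)),
        (((-1 : ℤˣ) ^ (p.1 + p.2) : ℤˣ) : ℤ)) ∧
    (PowerSeries.coeff (R := ℤ) n
        (∏ i ∈ Finset.Icc 1 n,
          (1 - PowerSeries.X ^ i) ^ 2 *
            PowerSeries.invOfUnit (1 + PowerSeries.X ^ (2 * i)) 1)).natAbs =
      Nat.card {p : ℤ × ℤ // p.1 ^ 2 + 2 * p.2 ^ 2 = (n : ℤ)} := by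
  classical
  -- notation
  set Θ : ℤ⟦X⟧ := Th 1 n * Th 2 n with hΘdef
  have hP : (∏ i ∈ Finset.Icc 1 n,
        (1 - (X:ℤ⟦X⟧) ^ i) ^ 2 * invOfUnit (1 + X ^ (2 * i)) 1)
      = (∏ i ∈ Finset.Icc 1 n, (1 - (X:ℤ⟦X⟧) ^ i) ^ 2)
        * ∏ i ∈ Finset.Icc 1 n, invOfUnit (1 + (X:ℤ⟦X⟧) ^ (2 * i)) 1 :=
    Finset.prod_mul_distrib
  have hAI : (∏ i ∈ Finset.Icc 1 n, (1 + (X:ℤ⟦X⟧) ^ (2 * i)))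
      * (∏ i ∈ Finset.Icc 1 n, invOfUnit (1 + (X:ℤ⟦X⟧) ^ (2 * i)) 1) = 1 := by
    rw [← Finset.prod_mul_distrib]
    rw [Finset.prod_congr rfl (fun i hi => ?_), Finset.prod_const_one]
    apply mul_invOfUnit
    have hi1 : 1 ≤ i := (Finset.mem_Icc.mp hi).1
    have h0 : (constantCoeff (R := ℤ)) ((X:ℤ⟦X⟧)^(2*i)) = 0 := by
      rw [← PowerSeries.coeff_zero_eq_constantCoeff_apply, PowerSeries.coeff_X_pow,
        if_neg (by positivity : (0:ℕ) ≠ 2*i)]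
    rw [map_add, map_one, h0, add_zero, Units.val_one]
  -- key congruence : X^(n+1) ∣ B - Θ * A
  have hTh : (X:ℤ⟦X⟧)^(n+1) ∣ (∏ i ∈ Finset.Icc 1 n, (1 - (X:ℤ⟦X⟧) ^ i) ^ 2)
      - Θ * ∏ i ∈ Finset.Icc 1 n, (1 + (X:ℤ⟦X⟧) ^ (2 * i)) := by
    have g1 := gauss_cong 1 n le_rfl
    have g2 := gauss_cong 2 n (by omega)
    have e1 : Fp ((X:ℤ⟦X⟧)^(2*1)) n = ∏ i ∈ Finset.Icc 1 n, (1 - (X:ℤ⟦X⟧)^(2*i)) := by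
      rw [Fp, ← Finset.Icc_add_one_left_eq_Ioc]
      apply Finset.prod_congr rfl
      intro i _
      rw [← pow_mul, show 2*1*i = 2*i from by ring]
    have e2 : Fp ((X:ℤ⟦X⟧)^(2*2)) n = ∏ i ∈ Finset.Icc 1 n, (1 - (X:ℤ⟦X⟧)^(4*i)) := by
      rw [Fp, ← Finset.Icc_add_one_left_eq_Ioc]
      apply Finset.prod_congr rfl
      intro i _
      rw [← pow_mul, show 2*2*i = 4*i from by ring]
    have e1' : Sq 1 n = ∏ j ∈ Finset.Icc 1 n, (1 - (X:ℤ⟦X⟧)^(2*j-1))^2 := by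
      rw [Sq_closed]
      apply Finset.prod_congr rfl
      intro j _
      rw [one_mul]
    have e2' : Sq 2 n = ∏ j ∈ Finset.Icc 1 n, (1 - (X:ℤ⟦X⟧)^(4*j-2))^2 := by
      rw [Sq_closed]
      apply Finset.prod_congr rfl
      intro j _
      rw [show 2*(2*j-1) = 4*j-2 from by omega]
    rw [e1, e1'] at g1
    rw [e2, e2'] at g2
    have h1 : (X:ℤ⟦X⟧)^(n+1) ∣ (∏ i ∈ Finset.Icc 1 n, (1 - (X:ℤ⟦X⟧)^(2*i)))
        * (∏ j ∈ Finset.Icc 1 n, (1 - (X:ℤ⟦X⟧)^(2*j-1))^2) - Th 1 n :=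
      (pow_dvd_pow (X:ℤ⟦X⟧) (by omega : n+1 ≤ 1*(2*n+1))).trans g1
    have h2 : (X:ℤ⟦X⟧)^(n+1) ∣ (∏ i ∈ Finset.Icc 1 n, (1 - (X:ℤ⟦X⟧)^(4*i)))
        * (∏ j ∈ Finset.Icc 1 n, (1 - (X:ℤ⟦X⟧)^(4*j-2))^2) - Th 2 n :=
      (pow_dvd_pow (X:ℤ⟦X⟧) (by omega : n+1 ≤ 2*(2*n+1))).trans g2
    -- the elementary product rearrangement
    have hAe : (∏ i ∈ Finset.Icc 1 n, (1 - (X:ℤ⟦X⟧)^(2*i)))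
        * (∏ i ∈ Finset.Icc 1 n, (1 + (X:ℤ⟦X⟧)^(2*i)))
        = ∏ i ∈ Finset.Icc 1 n, (1 - (X:ℤ⟦X⟧)^(4*i)) := by
      rw [← Finset.prod_mul_distrib]
      apply Finset.prod_congr rfl
      intro i _
      rw [show 4*i = 2*i + 2*i from by ring, pow_add]
      ring
    have s1 : (∏ i ∈ Finset.Icc 1 n, (1 - (X:ℤ⟦X⟧)^(4*i)))
        * (∏ i ∈ Finset.Icc 1 n, (1 - (X:ℤ⟦X⟧)^(4*i-2)))
        = ∏ i ∈ Finset.Icc 1 (2*n), (1 - (X:ℤ⟦X⟧)^(2*i)) := by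
      rw [prod_Icc_even_odd (fun i => 1 - (X:ℤ⟦X⟧)^(2*i)) n]
      congr 1
      · apply Finset.prod_congr rfl
        intro i _
        rw [show 2*(2*i) = 4*i from by ring]
      · apply Finset.prod_congr rfl
        intro i _
        rw [show 2*(2*i-1) = 4*i-2 from by omega]
    have s2 : ∏ i ∈ Finset.Icc 1 (4*n), (1-(X:ℤ⟦X⟧)^i)
        = (∏ i ∈ Finset.Icc 1 (2*n), (1-(X:ℤ⟦X⟧)^(2*i)))
          * ∏ i ∈ Finset.Icc 1 (2*n), (1-(X:ℤ⟦X⟧)^(2*i-1)) := by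
      rw [show 4*n = 2*(2*n) from by ring, prod_Icc_even_odd (fun i => 1 - (X:ℤ⟦X⟧)^i) (2*n)]
    have s3 : (X:ℤ⟦X⟧)^(n+1) ∣ (∏ i ∈ Finset.Icc 1 (2*n), (1-(X:ℤ⟦X⟧)^(2*i-1)))
        - ∏ i ∈ Finset.Icc 1 n, (1-(X:ℤ⟦X⟧)^(2*i-1)) := by
      apply prod_drop _ n (2*n) (by omega)
      intro i hi1 hi2
      rw [show (1-(X:ℤ⟦X⟧)^(2*i-1)) - 1 = -(X:ℤ⟦X⟧)^(2*i-1) from by ring]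
      exact (pow_dvd_pow (X:ℤ⟦X⟧) (by omega)).neg_right
    have s4 : (X:ℤ⟦X⟧)^(n+1) ∣ (∏ i ∈ Finset.Icc 1 (4*n), (1-(X:ℤ⟦X⟧)^i))
        - ∏ i ∈ Finset.Icc 1 n, (1-(X:ℤ⟦X⟧)^i) := by
      apply prod_drop _ n (4*n) (by omega)
      intro i hi1 hi2
      rw [show (1-(X:ℤ⟦X⟧)^i) - 1 = -(X:ℤ⟦X⟧)^i from by ring]
      exact (pow_dvd_pow (X:ℤ⟦X⟧) (by omega)).neg_right
    -- E ≡ ∏_{i ≤ n} (1 - X^i)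
    have hE : (X:ℤ⟦X⟧)^(n+1) ∣ (∏ i ∈ Finset.Icc 1 n, (1 - (X:ℤ⟦X⟧)^(4*i)))
        * (∏ i ∈ Finset.Icc 1 n, (1 - (X:ℤ⟦X⟧)^(4*i-2)))
        * (∏ i ∈ Finset.Icc 1 n, (1 - (X:ℤ⟦X⟧)^(2*i-1)))
        - ∏ i ∈ Finset.Icc 1 n, (1-(X:ℤ⟦X⟧)^i) := by
      rw [s1]
      have expand : (∏ i ∈ Finset.Icc 1 (2*n), (1 - (X:ℤ⟦X⟧)^(2*i)))
            * (∏ i ∈ Finset.Icc 1 n, (1 - (X:ℤ⟦X⟧)^(2*i-1)))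
            - ∏ i ∈ Finset.Icc 1 n, (1-(X:ℤ⟦X⟧)^i)
          = (∏ i ∈ Finset.Icc 1 (2*n), (1 - (X:ℤ⟦X⟧)^(2*i)))
              * ((∏ i ∈ Finset.Icc 1 n, (1 - (X:ℤ⟦X⟧)^(2*i-1)))
                - ∏ i ∈ Finset.Icc 1 (2*n), (1-(X:ℤ⟦X⟧)^(2*i-1)))
            + ((∏ i ∈ Finset.Icc 1 (2*n), (1 - (X:ℤ⟦X⟧)^(2*i)))
                * (∏ i ∈ Finset.Icc 1 (2*n), (1-(X:ℤ⟦X⟧)^(2*i-1)))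
              - ∏ i ∈ Finset.Icc 1 n, (1-(X:ℤ⟦X⟧)^i)) := by ring
      rw [expand, ← s2]
      exact dvd_add ((dvd_sub_comm.mp s3).mul_left _) s4
    -- B ≡ E^2
    have hBsq : (X:ℤ⟦X⟧)^(n+1) ∣
        ((∏ i ∈ Finset.Icc 1 n, (1 - (X:ℤ⟦X⟧)^(4*i)))
          * (∏ i ∈ Finset.Icc 1 n, (1 - (X:ℤ⟦X⟧)^(4*i-2)))
          * (∏ i ∈ Finset.Icc 1 n, (1 - (X:ℤ⟦X⟧)^(2*i-1))))^2
        - ∏ i ∈ Finset.Icc 1 n, (1 - (X:ℤ⟦X⟧) ^ i) ^ 2 := by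
      rw [Finset.prod_pow]
      rw [pow_two, pow_two]
      exact dvd_sub_mul_mul hE hE
    -- G1 * G2 * A = E^2 exactly
    have hGE : ((∏ i ∈ Finset.Icc 1 n, (1 - (X:ℤ⟦X⟧)^(2*i)))
          * (∏ j ∈ Finset.Icc 1 n, (1 - (X:ℤ⟦X⟧)^(2*j-1))^2))
        * ((∏ i ∈ Finset.Icc 1 n, (1 - (X:ℤ⟦X⟧)^(4*i)))
          * (∏ j ∈ Finset.Icc 1 n, (1 - (X:ℤ⟦X⟧)^(4*j-2))^2))
        * (∏ i ∈ Finset.Icc 1 n, (1 + (X:ℤ⟦X⟧)^(2*i)))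
        = ((∏ i ∈ Finset.Icc 1 n, (1 - (X:ℤ⟦X⟧)^(4*i)))
          * (∏ i ∈ Finset.Icc 1 n, (1 - (X:ℤ⟦X⟧)^(4*i-2)))
          * (∏ i ∈ Finset.Icc 1 n, (1 - (X:ℤ⟦X⟧)^(2*i-1))))^2 := by
      rw [← hAe, Finset.prod_pow, Finset.prod_pow]
      ring
    -- combine
    have hmulA : (X:ℤ⟦X⟧)^(n+1) ∣
        ((∏ i ∈ Finset.Icc 1 n, (1 - (X:ℤ⟦X⟧)^(2*i)))
          * (∏ j ∈ Finset.Icc 1 n, (1 - (X:ℤ⟦X⟧)^(2*j-1))^2))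
        * ((∏ i ∈ Finset.Icc 1 n, (1 - (X:ℤ⟦X⟧)^(4*i)))
          * (∏ j ∈ Finset.Icc 1 n, (1 - (X:ℤ⟦X⟧)^(4*j-2))^2))
        * (∏ i ∈ Finset.Icc 1 n, (1 + (X:ℤ⟦X⟧)^(2*i)))
        - Θ * ∏ i ∈ Finset.Icc 1 n, (1 + (X:ℤ⟦X⟧)^(2*i)) := by
      exact dvd_sub_mul_mul (dvd_sub_mul_mul h1 h2) (by rw [sub_self]; exact dvd_zero _)
    rw [hGE] at hmulA
    have final : (∏ i ∈ Finset.Icc 1 n, (1 - (X:ℤ⟦X⟧) ^ i) ^ 2)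
        - Θ * ∏ i ∈ Finset.Icc 1 n, (1 + (X:ℤ⟦X⟧) ^ (2 * i))
        = -(((∏ i ∈ Finset.Icc 1 n, (1 - (X:ℤ⟦X⟧)^(4*i)))
            * (∏ i ∈ Finset.Icc 1 n, (1 - (X:ℤ⟦X⟧)^(4*i-2)))
            * (∏ i ∈ Finset.Icc 1 n, (1 - (X:ℤ⟦X⟧)^(2*i-1))))^2
          - ∏ i ∈ Finset.Icc 1 n, (1 - (X:ℤ⟦X⟧) ^ i) ^ 2)
        + (((∏ i ∈ Finset.Icc 1 n, (1 - (X:ℤ⟦X⟧)^(4*i)))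
            * (∏ i ∈ Finset.Icc 1 n, (1 - (X:ℤ⟦X⟧)^(4*i-2)))
            * (∏ i ∈ Finset.Icc 1 n, (1 - (X:ℤ⟦X⟧)^(2*i-1))))^2
          - Θ * ∏ i ∈ Finset.Icc 1 n, (1 + (X:ℤ⟦X⟧) ^ (2 * i))) := by
      have : ∀ i, 2 * i = 2 * i := fun _ => rfl
      ring
    rw [final]
    exact dvd_add hBsq.neg_right hmulA
  -- coefficient of the product equals coefficient of Θ
  have hco : (coeff (R := ℤ) n) (∏ i ∈ Finset.Icc 1 n,
        (1 - (X:ℤ⟦X⟧) ^ i) ^ 2 * invOfUnit (1 + X ^ (2 * i)) 1)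
      = (coeff (R := ℤ) n) Θ := by
    have hdvd : (X:ℤ⟦X⟧)^(n+1) ∣ (∏ i ∈ Finset.Icc 1 n,
          (1 - (X:ℤ⟦X⟧) ^ i) ^ 2 * invOfUnit (1 + X ^ (2 * i)) 1) - Θ := by
      have hre : (∏ i ∈ Finset.Icc 1 n,
            (1 - (X:ℤ⟦X⟧) ^ i) ^ 2 * invOfUnit (1 + X ^ (2 * i)) 1) - Θ
          = ((∏ i ∈ Finset.Icc 1 n, (1 - (X:ℤ⟦X⟧) ^ i) ^ 2)
              - Θ * ∏ i ∈ Finset.Icc 1 n, (1 + (X:ℤ⟦X⟧) ^ (2 * i)))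
            * (∏ i ∈ Finset.Icc 1 n, invOfUnit (1 + (X:ℤ⟦X⟧) ^ (2 * i)) 1)
            + Θ * (((∏ i ∈ Finset.Icc 1 n, (1 + (X:ℤ⟦X⟧) ^ (2 * i)))
              * ∏ i ∈ Finset.Icc 1 n, invOfUnit (1 + (X:ℤ⟦X⟧) ^ (2 * i)) 1) - 1) := by
        rw [hP]; ring
      rw [hre, hAI, sub_self, mul_zero, add_zero]
      exact hTh.mul_right _
    have h0 := (PowerSeries.X_pow_dvd_iff.mp hdvd) n (lt_add_one n)
    rw [map_sub, sub_eq_zero] at h0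
    exact h0
  -- coefficient of Θ
  have hThco : (coeff (R := ℤ) n) Θ
      = ∑ p ∈ (Finset.Icc (-(n : ℤ)) (n : ℤ) ×ˢ Finset.Icc (-(n : ℤ)) (n : ℤ)).filter
          (fun p => p.1 ^ 2 + 2 * p.2 ^ 2 = (n : ℤ)),
        (((-1 : ℤˣ) ^ (p.1 + p.2) : ℤˣ) : ℤ) := by
    have step1 : Θ = ∑ p ∈ (Finset.Icc (-(n : ℤ)) (n : ℤ) ×ˢ Finset.Icc (-(n : ℤ)) (n : ℤ)),
        C (R := ℤ) (sgnz p.1 * sgnz p.2) * (X:ℤ⟦X⟧)^(1*p.1.natAbs^2 + 2*p.2.natAbs^2) := by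
      rw [hΘdef, Th, Th, Finset.sum_mul_sum]
      rw [Finset.sum_product]
      apply Finset.sum_congr rfl
      intro x _
      apply Finset.sum_congr rfl
      intro y _
      rw [map_mul, pow_add]
      ring
    rw [step1, map_sum]
    have step2 : ∀ p ∈ (Finset.Icc (-(n : ℤ)) (n : ℤ) ×ˢ Finset.Icc (-(n : ℤ)) (n : ℤ)),
        (coeff (R := ℤ) n) (C (R := ℤ) (sgnz p.1 * sgnz p.2) * (X:ℤ⟦X⟧)^(1*p.1.natAbs^2 + 2*p.2.natAbs^2))
        = if 1*p.1.natAbs^2 + 2*p.2.natAbs^2 = n then sgnz p.1 * sgnz p.2 else 0 := by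
      intro p _
      rw [PowerSeries.coeff_C_mul, PowerSeries.coeff_X_pow]
      rcases eq_or_ne (1*p.1.natAbs^2 + 2*p.2.natAbs^2) n with he | he
      · rw [if_pos he, if_pos he.symm, mul_one]
      · rw [if_neg he, if_neg (fun h => he h.symm), mul_zero]
    rw [Finset.sum_congr rfl step2, ← Finset.sum_filter]
    apply Finset.sum_congr
    · apply Finset.filter_congr
      intro p _
      have hcast : ((1*p.1.natAbs^2 + 2*p.2.natAbs^2 : ℕ) : ℤ) = p.1^2 + 2*p.2^2 := by
        push_cast
        rw [sq_abs, sq_abs]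
        ring
      constructor
      · intro h
        rw [← hcast]
        exact_mod_cast congrArg (Nat.cast : ℕ → ℤ) h
      · intro h
        have : ((1*p.1.natAbs^2 + 2*p.2.natAbs^2 : ℕ) : ℤ) = ((n:ℕ) : ℤ) := by rw [hcast, h]
        exact_mod_cast this
    · intro p _
      unfold sgnz
      rw [← Units.val_mul, ← zpow_add]
  -- first conjunct
  have hfirst := hco.trans hThco
  refine ⟨hfirst, ?_⟩
  -- second conjunct
  rw [hfirst]
  set S := (Finset.Icc (-(n : ℤ)) (n : ℤ) ×ˢ Finset.Icc (-(n : ℤ)) (n : ℤ)).filter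
      (fun p => p.1 ^ 2 + 2 * p.2 ^ 2 = (n : ℤ)) with hS
  have hcard : Nat.card {p : ℤ × ℤ // p.1 ^ 2 + 2 * p.2 ^ 2 = (n : ℤ)} = S.card := by
    have hsets : {p : ℤ × ℤ | p.1 ^ 2 + 2 * p.2 ^ 2 = (n : ℤ)} = (↑S : Set (ℤ × ℤ)) := by
      ext p
      simp only [Set.mem_setOf_eq, hS, Finset.coe_filter, Finset.mem_product]
      constructor
      · intro h
        exact ⟨by simpa [Finset.mem_product] using mem_box hn h, h⟩
      · intro h
        exact h.2
    have : Nat.card {p : ℤ × ℤ // p.1 ^ 2 + 2 * p.2 ^ 2 = (n : ℤ)}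
        = Nat.card ↥{p : ℤ × ℤ | p.1 ^ 2 + 2 * p.2 ^ 2 = (n : ℤ)} := rfl
    rw [this, Nat.card_coe_set_eq, hsets, Set.ncard_coe_finset]
  rw [hcard]
  rcases S.eq_empty_or_nonempty with hSe | ⟨p₀, hp₀⟩
  · rw [hSe]
    simp
  · have hmem : ∀ p ∈ S, p.1 ^ 2 + 2 * p.2 ^ 2 = (n:ℤ) := by
      intro p hp
      exact (Finset.mem_filter.mp hp).2
    have hconst : ∀ p ∈ S, (((-1 : ℤˣ) ^ (p.1 + p.2) : ℤˣ) : ℤ)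
        = (((-1 : ℤˣ) ^ (p₀.1 + p₀.2) : ℤˣ) : ℤ) := by
      intro p hp
      exact congrArg Units.val (sign_const ((hmem p hp).trans (hmem p₀ hp₀).symm))
    rw [Finset.sum_congr rfl hconst, Finset.sum_const, nsmul_eq_mul, Int.natAbs_mul]
    rw [Int.units_natAbs, Int.natAbs_natCast, mul_one]
end
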